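/- arXiv:2603.28468 — 5 statements merged into one kernel-verified Lean document; each statement's English description precedes it below -/
import Mathlib

section
/- Let d ∈ {1,2,3,7,11} and let p₁/q₁ and p₂/q₂ be points of ℚ(√(-d)) ∪ {∞} written with p_k, q_k ∈ ℤ[ω_d] coprime (k = 1,2). Then there exists a matrix A ∈ SL(2, ℤ[ω_d]) whose Möbius transformation satisfies A(∞) = p₁/q₁ and A(0) = p₂/q₂ (equivalently A·[1:0] = [p₁:q₁] and A·[0:1] = [p₂:q₂] in the projective line over ℚ(√(-d))) if and only if |p₁q₂ − p₂q₁| = 1. -/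
/-- `ω_d`: the generator of the ring of integers of `ℚ(√(-d))`. -/
noncomputable def omegaD (d : ℕ) : ℂ :=
  if d % 4 = 3 then (1 + Complex.I * Real.sqrt d) / 2 else Complex.I * Real.sqrt d

/-- The ring of integers `ℤ[ω_d]` of `ℚ(√(-d))`, as a subset of `ℂ`. -/
def ringInt (d : ℕ) : Set ℂ := {z | ∃ a b : ℤ, z = (a : ℂ) + (b : ℂ) * omegaD d}

/-- `p` and `q` are coprime in `ℤ[ω_d]`. -/
def CoprimeIn (d : ℕ) (p q : ℂ) : Prop :=
  ∃ u v : ℂ, u ∈ ringInt d ∧ v ∈ ringInt d ∧ u * p + v * q = 1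

/-- `x` is an element of the field `ℚ(√(-d)) ⊆ ℂ`. -/
def inK (d : ℕ) (x : ℂ) : Prop :=
  ∃ p q : ℂ, p ∈ ringInt d ∧ q ∈ ringInt d ∧ q ≠ 0 ∧ x = p / q

/-- The point `p/q` of `ℂ ∪ {∞}`, with `p/0 = ∞`. -/
noncomputable def divC (p q : ℂ) : OnePoint ℂ :=
  if q = 0 then OnePoint.infty else ((p / q : ℂ) : OnePoint ℂ)

/-- Two points of `ℚ(√(-d)) ∪ {∞}` are Farey neighbours (joined by an edge of
the Farey graph `E_d`) if they have coprime representations `p₁/q₁`, `p₂/q₂`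
with `|p₁q₂ − p₂q₁| = 1`. -/
def FareyAdj (d : ℕ) (x y : OnePoint ℂ) : Prop :=
  ∃ p₁ q₁ p₂ q₂ : ℂ, p₁ ∈ ringInt d ∧ q₁ ∈ ringInt d ∧ p₂ ∈ ringInt d ∧ q₂ ∈ ringInt d ∧
    CoprimeIn d p₁ q₁ ∧ CoprimeIn d p₂ q₂ ∧ x = divC p₁ q₁ ∧ y = divC p₂ q₂ ∧
    ‖p₁ * q₂ - p₂ * q₁‖ = 1

/-- `f 0 → f 1 → ⋯ → f n` is a walk (of length `n`) in the Farey graph `E_d`. -/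
def IsWalk (d n : ℕ) (f : ℕ → OnePoint ℂ) : Prop := ∀ k, k < n → FareyAdj d (f k) (f (k + 1))

/-- `f 0 → ⋯ → f n` is a geodesic path in `E_d`: a walk of minimal length
among all walks with the same endpoints. -/
def IsGeodesicWalk (d n : ℕ) (f : ℕ → OnePoint ℂ) : Prop :=
  IsWalk d n f ∧ ∀ (m : ℕ) (g : ℕ → OnePoint ℂ), IsWalk d m g → g 0 = f 0 → g m = f n → n ≤ m

/-- Numerators of the convergents of `[a₁, a₂, …]` (`a 0` is unused):
`p₀ = 0`, `p₁ = 1`, `p_k = a_k p_{k−1} + p_{k−2}`. -/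
noncomputable def cfP (a : ℕ → ℂ) : ℕ → ℂ
  | 0 => 0
  | 1 => 1
  | (k + 2) => a (k + 2) * cfP a (k + 1) + cfP a k

/-- Denominators of the convergents of `[a₁, a₂, …]`:
`q₀ = 1`, `q₁ = a₁`, `q_k = a_k q_{k−1} + q_{k−2}`. -/
noncomputable def cfQ (a : ℕ → ℂ) : ℕ → ℂ
  | 0 => 1
  | 1 => a 1
  | (k + 2) => a (k + 2) * cfQ a (k + 1) + cfQ a k

/-- The walk `∞ → p₀/q₀ = 0 → p₁/q₁ → ⋯` along the convergents of `[a₁, a₂, …]`. -/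
noncomputable def cfWalk (a : ℕ → ℂ) : ℕ → OnePoint ℂ :=
  fun k => if k = 0 then OnePoint.infty else divC (cfP a (k - 1)) (cfQ a (k - 1))



lemma sqrt_mul_self' (d : ℕ) : ((Real.sqrt d : ℝ) : ℂ) * ((Real.sqrt d : ℝ) : ℂ) = (d : ℂ) := by
  rw [← Complex.ofReal_mul, Real.mul_self_sqrt (by positivity)]
  norm_num

lemma omega_sq_of_mod (d : ℕ) (h : d % 4 = 3) :
    omegaD d ^ 2 = omegaD d - ((d : ℂ) + 1) / 4 := by
  unfold omegaD
  rw [if_pos h]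
  linear_combination ((((Real.sqrt d : ℝ) : ℂ) * ((Real.sqrt d : ℝ) : ℂ))/4) * Complex.I_mul_I - (1/4) * sqrt_mul_self' d

lemma omega_sq_of_not_mod (d : ℕ) (h : ¬ d % 4 = 3) :
    omegaD d ^ 2 = -(d : ℂ) := by
  unfold omegaD
  rw [if_neg h]
  linear_combination (((Real.sqrt d : ℝ) : ℂ) * ((Real.sqrt d : ℝ) : ℂ)) * Complex.I_mul_I - sqrt_mul_self' d

lemma rint_intCast (d : ℕ) (n : ℤ) : (n : ℂ) ∈ ringInt d := ⟨n, 0, by simp⟩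

lemma rint_add {d : ℕ} {z w : ℂ} (hz : z ∈ ringInt d) (hw : w ∈ ringInt d) :
    z + w ∈ ringInt d := by
  obtain ⟨a, b, rfl⟩ := hz; obtain ⟨a', b', rfl⟩ := hw
  exact ⟨a + a', b + b', by push_cast; ring⟩

lemma rint_mul {d : ℕ} {z w : ℂ} (hz : z ∈ ringInt d) (hw : w ∈ ringInt d) :
    z * w ∈ ringInt d := by
  obtain ⟨a, b, rfl⟩ := hz; obtain ⟨a', b', rfl⟩ := hw
  by_cases h : d % 4 = 3
  · obtain ⟨m, hm4⟩ : ∃ m : ℕ, d + 1 = 4 * m := ⟨(d + 1) / 4, by omega⟩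
    have hm : (4 : ℂ) * (m : ℂ) = (d : ℂ) + 1 := by exact_mod_cast congrArg (Nat.cast (R := ℂ)) hm4.symm
    refine ⟨a * a' - b * b' * (m : ℤ), a * b' + a' * b + b * b', ?_⟩
    push_cast
    linear_combination ((b : ℂ) * b') * omega_sq_of_mod d h + ((b : ℂ) * b' / 4) * hm
  · refine ⟨a * a' - b * b' * d, a * b' + a' * b, ?_⟩
    push_cast
    linear_combination ((b : ℂ) * b') * omega_sq_of_not_mod d h

lemma rint_sub {d : ℕ} {z w : ℂ} (hz : z ∈ ringInt d) (hw : w ∈ ringInt d) :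
    z - w ∈ ringInt d := by
  have := rint_add hz (rint_mul (rint_intCast d (-1)) hw)
  simpa [sub_eq_add_neg] using this

lemma conj_omega_mod (d : ℕ) (h : d % 4 = 3) :
    (starRingEnd ℂ) (omegaD d) = 1 - omegaD d := by
  unfold omegaD
  rw [if_pos h]
  simp [map_div₀, Complex.conj_I, Complex.conj_ofReal, map_ofNat]
  ring

lemma conj_omega_not_mod (d : ℕ) (h : ¬ d % 4 = 3) :
    (starRingEnd ℂ) (omegaD d) = -omegaD d := by
  unfold omegaD
  rw [if_neg h]
  simp [Complex.conj_I, Complex.conj_ofReal]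

lemma rint_conj {d : ℕ} {z : ℂ} (hz : z ∈ ringInt d) :
    (starRingEnd ℂ) z ∈ ringInt d := by
  obtain ⟨a, b, rfl⟩ := hz
  by_cases h : d % 4 = 3
  · exact ⟨a + b, -b, by simp only [map_add, map_mul, map_intCast, conj_omega_mod d h]; push_cast; ring⟩
  · exact ⟨a, -b, by simp only [map_add, map_mul, map_intCast, conj_omega_not_mod d h]; push_cast; ring⟩


lemma omega_im_pos (d : ℕ) (hd : d ≠ 0) : 0 < (omegaD d).im := by
  have hs : 0 < Real.sqrt d := Real.sqrt_pos.2 (by exact_mod_cast Nat.pos_of_ne_zero hd)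
  unfold omegaD
  split
  · simp [Complex.div_im, Complex.add_im, Complex.mul_im]
    positivity
  · simp [Complex.mul_im]
    positivity

lemma rint_real_int {d : ℕ} (hd : d ≠ 0) {z : ℂ} (hz : z ∈ ringInt d) (him : z.im = 0) :
    ∃ n : ℤ, z = (n : ℂ) := by
  obtain ⟨a, b, rfl⟩ := hz
  have h1 : ((a : ℂ) + (b : ℂ) * omegaD d).im = (b : ℝ) * (omegaD d).im := by
    simp [Complex.add_im, Complex.mul_im]
  rw [h1] at him
  have hb : (b : ℝ) = 0 := by
    rcases mul_eq_zero.1 him with h | h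
    · exact h
    · exact absurd h (ne_of_gt (omega_im_pos d hd))
  have hb' : b = 0 := by exact_mod_cast hb
  exact ⟨a, by simp [hb']⟩
lemma rint_normSq_int {d : ℕ} (hd : d ≠ 0) {z : ℂ} (hz : z ∈ ringInt d) :
    ∃ n : ℤ, (Complex.normSq z : ℝ) = (n : ℝ) := by
  have h1 : (Complex.normSq z : ℂ) ∈ ringInt d := by
    rw [← Complex.mul_conj]; exact rint_mul hz (rint_conj hz)
  obtain ⟨n, hn⟩ := rint_real_int hd h1 (by simp)
  exact ⟨n, by exact_mod_cast hn⟩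

lemma abs_one_of_unit {d : ℕ} (hd : d ≠ 0) {z w : ℂ} (hz : z ∈ ringInt d)
    (hw : w ∈ ringInt d) (hzw : z * w = 1) : ‖z‖ = 1 := by
  obtain ⟨n, hn⟩ := rint_normSq_int hd hz
  obtain ⟨m, hm⟩ := rint_normSq_int hd hw
  have h1 : Complex.normSq z * Complex.normSq w = 1 := by
    rw [← map_mul, hzw, map_one]
  have hnm : (n : ℝ) * (m : ℝ) = 1 := by rw [← hn, ← hm]; exact h1
  have hnm' : n * m = 1 := by exact_mod_cast hnm
  have hn0 : 0 ≤ n := by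
    have := Complex.normSq_nonneg z; rw [hn] at this; exact_mod_cast this
  have hn1 : n = 1 := by
    rcases Int.mul_eq_one_iff_eq_one_or_neg_one.1 hnm' with ⟨h, _⟩ | ⟨h, _⟩
    · exact h
    · omega
  have : Complex.normSq z = 1 := by rw [hn, hn1]; norm_num
  have h2 : ‖z‖ ^ 2 = 1 := by rw [Complex.sq_norm, this]
  nlinarith [norm_nonneg z]

/-- For `d ∈ {1,2,3,7,11}` and points `p₁/q₁`, `p₂/q₂` of
`ℚ(√(-d)) ∪ {∞}` in coprime lowest terms, there is a matrix
`A ∈ SL(2, ℤ[ω_d])` with `A·[1:0] = [p₁:q₁]` and `A·[0:1] = [p₂:q₂]`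
(projectively) if and only if `|p₁q₂ − p₂q₁| = 1`. -/
theorem farey_edge_iff_det_one (d : ℕ) (hd : d ∈ ({1, 2, 3, 7, 11} : Set ℕ))
    (p₁ q₁ p₂ q₂ : ℂ)
    (hp₁ : p₁ ∈ ringInt d) (hq₁ : q₁ ∈ ringInt d)
    (hp₂ : p₂ ∈ ringInt d) (hq₂ : q₂ ∈ ringInt d)
    (hc₁ : CoprimeIn d p₁ q₁) (hc₂ : CoprimeIn d p₂ q₂) :
    (∃ A : Matrix (Fin 2) (Fin 2) ℂ,
        (∀ i j, A i j ∈ ringInt d) ∧ A.det = 1 ∧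
        (∃ c : ℂ, c ≠ 0 ∧ A 0 0 = c * p₁ ∧ A 1 0 = c * q₁) ∧
        (∃ c : ℂ, c ≠ 0 ∧ A 0 1 = c * p₂ ∧ A 1 1 = c * q₂)) ↔
      ‖p₁ * q₂ - p₂ * q₁‖ = 1 := by
  have hd0 : d ≠ 0 := by rintro rfl; simp at hd
  constructor
  · rintro ⟨A, hA, hdet, ⟨c₁, hc1, h00, h10⟩, ⟨c₂, hc2, h01, h11⟩⟩
    rw [Matrix.det_fin_two] at hdet
    have hΔ : p₁ * q₂ - p₂ * q₁ ∈ ringInt d :=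
      rint_sub (rint_mul hp₁ hq₂) (rint_mul hp₂ hq₁)
    obtain ⟨u, v, hu, hv, huv⟩ := hc₁
    obtain ⟨u', v', hu', hv', huv'⟩ := hc₂
    have hc1mem : c₁ ∈ ringInt d := by
      have : c₁ = u * A 0 0 + v * A 1 0 := by
        rw [h00, h10]; linear_combination (-c₁) * huv
      rw [this]
      exact rint_add (rint_mul hu (hA 0 0)) (rint_mul hv (hA 1 0))
    have hc2mem : c₂ ∈ ringInt d := by
      have : c₂ = u' * A 0 1 + v' * A 1 1 := by
        rw [h01, h11]; linear_combination (-c₂) * huv'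
      rw [this]
      exact rint_add (rint_mul hu' (hA 0 1)) (rint_mul hv' (hA 1 1))
    have key : (p₁ * q₂ - p₂ * q₁) * (c₁ * c₂) = 1 := by
      rw [h00, h10, h01, h11] at hdet; linear_combination hdet
    exact abs_one_of_unit hd0 hΔ (rint_mul hc1mem hc2mem) key
  · intro h
    set e : ℂ := (starRingEnd ℂ) (p₁ * q₂ - p₂ * q₁) with he
    have hΔ : p₁ * q₂ - p₂ * q₁ ∈ ringInt d :=
      rint_sub (rint_mul hp₁ hq₂) (rint_mul hp₂ hq₁)
    have hemem : e ∈ ringInt d := rint_conj hΔ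
    have hkey : (p₁ * q₂ - p₂ * q₁) * e = 1 := by
      rw [he, Complex.mul_conj]
      rw [← Complex.sq_norm, h]
      norm_num
    have he0 : e ≠ 0 := by
      intro h0; rw [h0, mul_zero] at hkey; exact one_ne_zero hkey.symm
    refine ⟨!![p₁, e * p₂; q₁, e * q₂], ?_, ?_, ⟨1, one_ne_zero, by simp, by simp⟩,
      ⟨e, he0, by simp, by simp⟩⟩
    · intro i j
      fin_cases i <;> fin_cases j <;> simp
      · exact hp₁
      · exact rint_mul hemem hp₂
      · exact hq₁
      · exact rint_mul hemem hq₂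
    · rw [Matrix.det_fin_two_of]
      linear_combination hkey
end

section
/- Define G₂ = ℤ[ω₂] ∪ (ℤ[ω₂] + ω₂/2), G₇ = ℤ[ω₇] ∪ (ℤ[ω₇] + ω₇/2), and G₁₁ = ℤ[ω₁₁] ∪ (ℤ[ω₁₁] + ω₁₁/3) ∪ (ℤ[ω₁₁] + ω₁₁/2) ∪ (ℤ[ω₁₁] + 2ω₁₁/3). For each d ∈ {2,7,11}, the subgraph of the Farey graph E_d induced on the vertex set G_d is connected: any two elements of G_d are joined by a walk in E_d all of whose vertices belong to G_d. -/
/-- The sets `G_d` of Statement 3: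
`G₂ = ℤ[ω₂] ∪ (ℤ[ω₂] + ω₂/2)`, `G₇ = ℤ[ω₇] ∪ (ℤ[ω₇] + ω₇/2)`,
`G₁₁ = ℤ[ω₁₁] ∪ (ℤ[ω₁₁] + ω₁₁/3) ∪ (ℤ[ω₁₁] + ω₁₁/2) ∪ (ℤ[ω₁₁] + 2ω₁₁/3)`. -/
def Gset (d : ℕ) : Set ℂ :=
  if d = 11 then
    {z | z ∈ ringInt 11 ∨ z - omegaD 11 / 3 ∈ ringInt 11 ∨ z - omegaD 11 / 2 ∈ ringInt 11 ∨
      z - 2 * omegaD 11 / 3 ∈ ringInt 11}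
  else {z | z ∈ ringInt d ∨ z - omegaD d / 2 ∈ ringInt d}

/- ## Auxiliary material -/

section Aux

/-- Membership constructor for `ringInt`. -/
lemma mem_ringInt' {d : ℕ} (a b : ℤ) {z : ℂ} (h : z = (a : ℂ) + (b : ℂ) * omegaD d) :
    z ∈ ringInt d := ⟨a, b, h⟩

lemma zero_mem_ringInt (d : ℕ) : (0 : ℂ) ∈ ringInt d :=
  mem_ringInt' 0 0 (by push_cast; ring)

lemma one_mem_ringInt (d : ℕ) : (1 : ℂ) ∈ ringInt d :=
  mem_ringInt' 1 0 (by push_cast; ring)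

lemma omega_mem_ringInt (d : ℕ) : omegaD d ∈ ringInt d :=
  mem_ringInt' 0 1 (by push_cast; ring)

lemma neg_one_mem_ringInt (d : ℕ) : (-1 : ℂ) ∈ ringInt d :=
  mem_ringInt' (-1) 0 (by push_cast; ring)

lemma ringInt_add {d : ℕ} {x y : ℂ} (hx : x ∈ ringInt d) (hy : y ∈ ringInt d) :
    x + y ∈ ringInt d := by
  obtain ⟨a, b, rfl⟩ := hx; obtain ⟨c, e, rfl⟩ := hy
  exact mem_ringInt' (a + c) (b + e) (by push_cast; ring)

lemma ringInt_neg {d : ℕ} {x : ℂ} (hx : x ∈ ringInt d) : -x ∈ ringInt d := by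
  obtain ⟨a, b, rfl⟩ := hx
  exact mem_ringInt' (-a) (-b) (by push_cast; ring)

lemma ringInt_mul {d : ℕ} {e f : ℤ} (hω : omegaD d ^ 2 = (e : ℂ) + (f : ℂ) * omegaD d)
    {x y : ℂ} (hx : x ∈ ringInt d) (hy : y ∈ ringInt d) : x * y ∈ ringInt d := by
  obtain ⟨a, b, rfl⟩ := hx; obtain ⟨c, g, rfl⟩ := hy
  exact mem_ringInt' (a * c + b * g * e) (a * g + b * c + b * g * f)
    (by push_cast; linear_combination (b : ℂ) * (g : ℂ) * hω)

/- ### The three quadratic relations -/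

lemma omega_sq2 : omegaD 2 ^ 2 = -2 := by
  have h : ((Real.sqrt 2 : ℝ) : ℂ) ^ 2 = 2 := by
    rw [← Complex.ofReal_pow, Real.sq_sqrt (by norm_num : (0:ℝ) ≤ 2)]; norm_num
  have h2 : omegaD 2 = Complex.I * (Real.sqrt 2 : ℝ) := by
    simp [omegaD]
  rw [h2]
  linear_combination Complex.I ^ 2 * h + 2 * Complex.I_sq

lemma omega_sq7 : omegaD 7 ^ 2 = omegaD 7 - 2 := by
  have h : (Complex.I * (Real.sqrt 7 : ℝ)) ^ 2 = -7 := by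
    have h7 : ((Real.sqrt 7 : ℝ) : ℂ) ^ 2 = 7 := by
      rw [← Complex.ofReal_pow, Real.sq_sqrt (by norm_num : (0:ℝ) ≤ 7)]; norm_num
    linear_combination Complex.I ^ 2 * h7 + 7 * Complex.I_sq
  have h2 : omegaD 7 = (1 + Complex.I * (Real.sqrt 7 : ℝ)) / 2 := by
    simp [omegaD]
  rw [h2]
  linear_combination h / 4

lemma omega_sq11 : omegaD 11 ^ 2 = omegaD 11 - 3 := by
  have h : (Complex.I * (Real.sqrt 11 : ℝ)) ^ 2 = -11 := by
    have h11 : ((Real.sqrt 11 : ℝ) : ℂ) ^ 2 = 11 := by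
      rw [← Complex.ofReal_pow, Real.sq_sqrt (by norm_num : (0:ℝ) ≤ 11)]; norm_num
    linear_combination Complex.I ^ 2 * h11 + 11 * Complex.I_sq
  have h2 : omegaD 11 = (1 + Complex.I * (Real.sqrt 11 : ℝ)) / 2 := by
    simp [omegaD]
  rw [h2]
  linear_combination h / 4

lemma omega_sq2' : omegaD 2 ^ 2 = ((-2 : ℤ) : ℂ) + ((0 : ℤ) : ℂ) * omegaD 2 := by
  push_cast; linear_combination omega_sq2

lemma omega_sq7' : omegaD 7 ^ 2 = ((-2 : ℤ) : ℂ) + ((1 : ℤ) : ℂ) * omegaD 7 := by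
  push_cast; linear_combination omega_sq7

lemma omega_sq11' : omegaD 11 ^ 2 = ((-3 : ℤ) : ℂ) + ((1 : ℤ) : ℂ) * omegaD 11 := by
  push_cast; linear_combination omega_sq11

lemma omega2_ne_zero : omegaD 2 ≠ 0 := by
  intro h; have := omega_sq2; rw [h] at this; norm_num at this

lemma one_sub_omega7_ne_zero : (1 : ℂ) - omegaD 7 ≠ 0 := by
  intro h
  have h1 : omegaD 7 = 1 := by linear_combination -h
  have := omega_sq7; rw [h1] at this; norm_num at this

lemma one_sub_omega11_ne_zero : (1 : ℂ) - omegaD 11 ≠ 0 := by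
  intro h
  have h1 : omegaD 11 = 1 := by linear_combination -h
  have := omega_sq11; rw [h1] at this; norm_num at this

/- ### Gset membership -/

lemma mem_Gset_of_ringInt {d : ℕ} {z : ℂ} (h : z ∈ ringInt d) : z ∈ Gset d := by
  by_cases h11 : d = 11
  · subst h11; unfold Gset; rw [if_pos rfl]; exact Or.inl h
  · unfold Gset; rw [if_neg h11]; exact Or.inl h

lemma mem_Gset_half {d : ℕ} (hd : d ≠ 11) {t : ℂ} (ht : t ∈ ringInt d) :
    omegaD d / 2 + t ∈ Gset d := by
  unfold Gset
  rw [if_neg hd]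
  right
  have : omegaD d / 2 + t - omegaD d / 2 = t := by ring
  rw [this]; exact ht

lemma mem_Gset11_third {t : ℂ} (ht : t ∈ ringInt 11) : omegaD 11 / 3 + t ∈ Gset 11 := by
  unfold Gset
  rw [if_pos rfl]
  refine Or.inr (Or.inl ?_)
  have : omegaD 11 / 3 + t - omegaD 11 / 3 = t := by ring
  rw [this]; exact ht

lemma mem_Gset11_half {t : ℂ} (ht : t ∈ ringInt 11) : omegaD 11 / 2 + t ∈ Gset 11 := by
  unfold Gset
  rw [if_pos rfl]
  refine Or.inr (Or.inr (Or.inl ?_))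
  have : omegaD 11 / 2 + t - omegaD 11 / 2 = t := by ring
  rw [this]; exact ht

lemma mem_Gset11_twothird {t : ℂ} (ht : t ∈ ringInt 11) :
    2 * omegaD 11 / 3 + t ∈ Gset 11 := by
  unfold Gset
  rw [if_pos rfl]
  refine Or.inr (Or.inr (Or.inr ?_))
  have : 2 * omegaD 11 / 3 + t - 2 * omegaD 11 / 3 = t := by ring
  rw [this]; exact ht

/- ### Walk connectivity -/

def Conn (d : ℕ) (x y : ℂ) : Prop :=
  ∃ (n : ℕ) (f : ℕ → OnePoint ℂ), f 0 = ((x : ℂ) : OnePoint ℂ) ∧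
    f n = ((y : ℂ) : OnePoint ℂ) ∧ IsWalk d n f ∧
    ∀ k ≤ n, ∃ z ∈ Gset d, f k = ((z : ℂ) : OnePoint ℂ)

lemma Conn.refl {d : ℕ} {x : ℂ} (hx : x ∈ Gset d) : Conn d x x :=
  ⟨0, fun _ => (x : OnePoint ℂ), rfl, rfl, fun k hk => absurd hk (Nat.not_lt_zero k),
    fun _ _ => ⟨x, hx, rfl⟩⟩

lemma FareyAdj.symm' {d : ℕ} {x y : OnePoint ℂ} (h : FareyAdj d x y) : FareyAdj d y x := by
  obtain ⟨p₁, q₁, p₂, q₂, h₁, h₂, h₃, h₄, c₁, c₂, hx, hy, habs⟩ := h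
  refine ⟨p₂, q₂, p₁, q₁, h₃, h₄, h₁, h₂, c₂, c₁, hy, hx, ?_⟩
  rw [show p₂ * q₁ - p₁ * q₂ = -(p₁ * q₂ - p₂ * q₁) by ring, norm_neg]
  exact habs

lemma Conn.symm {d : ℕ} {x y : ℂ} (h : Conn d x y) : Conn d y x := by
  obtain ⟨n, f, h0, hn, hw, hv⟩ := h
  refine ⟨n, fun k => f (n - k), by simpa using hn, by simpa using h0, ?_, ?_⟩
  · intro k hk
    show FareyAdj d (f (n - k)) (f (n - (k + 1)))
    have e : n - k = (n - (k + 1)) + 1 := by omega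
    rw [e]
    exact (hw (n - (k + 1)) (by omega)).symm'
  · intro k hk
    exact hv (n - k) (by omega)  

lemma Conn.trans {d : ℕ} {x y z : ℂ} (h₁ : Conn d x y) (h₂ : Conn d y z) : Conn d x z := by
  obtain ⟨n₁, f₁, h10, h1n, h1w, h1v⟩ := h₁
  obtain ⟨n₂, f₂, h20, h2n, h2w, h2v⟩ := h₂
  refine ⟨n₁ + n₂, fun k => if k < n₁ then f₁ k else f₂ (k - n₁), ?_, ?_, ?_, ?_⟩
  · by_cases h : 0 < n₁
    · simpa [h] using h10
    · have hn0 : n₁ = 0 := by omega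
      subst hn0
      simp only [h, if_false]
      rw [h20, ← h1n, h10]
  · have : ¬ (n₁ + n₂ < n₁) := by omega
    simp only [this, if_false]
    simpa using h2n
  · intro k hk
    by_cases hk1 : k + 1 < n₁
    · have hk0 : k < n₁ := by omega
      simp only [hk0, hk1, if_true]
      exact h1w k hk0
    · by_cases hk0 : k < n₁
      · -- k + 1 = n₁
        have e : k + 1 = n₁ := by omega
        simp only [hk0, hk1, if_true, if_false]
        have hb : f₂ (k + 1 - n₁) = f₁ (k + 1) := by
          rw [e, Nat.sub_self, h20, h1n]
        rw [hb]
        exact h1w k hk0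
      · simp only [hk0, if_false]
        have h1 : ¬ (k + 1 < n₁) := by omega
        simp only [h1, if_false]
        have e : k + 1 - n₁ = (k - n₁) + 1 := by omega
        rw [e]
        exact h2w (k - n₁) (by omega)
  · intro k hk
    by_cases hk0 : k < n₁
    · simp only [hk0, if_true]; exact h1v k (by omega)
    · simp only [hk0, if_false]; exact h2v (k - n₁) (by omega)

end Aux
section Aux2

lemma Conn.single {d : ℕ} {x y : ℂ} (hx : x ∈ Gset d) (hy : y ∈ Gset d)
    (h : FareyAdj d ((x : ℂ) : OnePoint ℂ) ((y : ℂ) : OnePoint ℂ)) : Conn d x y := by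
  refine ⟨1, fun k => if k = 0 then (x : OnePoint ℂ) else (y : OnePoint ℂ), by simp, by simp,
    ?_, ?_⟩
  · intro k hk
    have hk0 : k = 0 := by omega
    subst hk0
    simpa using h
  · intro k _
    cases k with
    | zero => exact ⟨x, hx, by simp⟩
    | succ m => exact ⟨y, hy, by simp⟩

lemma fareyAdj_of {d : ℕ} {p₁ q₁ p₂ q₂ x y : ℂ}
    (h₁ : p₁ ∈ ringInt d) (h₂ : q₁ ∈ ringInt d) (h₃ : p₂ ∈ ringInt d) (h₄ : q₂ ∈ ringInt d)
    (c₁ : CoprimeIn d p₁ q₁) (c₂ : CoprimeIn d p₂ q₂)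
    (hq₁ : q₁ ≠ 0) (hq₂ : q₂ ≠ 0)
    (hx : x * q₁ = p₁) (hy : y * q₂ = p₂)
    (habs : ‖p₁ * q₂ - p₂ * q₁‖ = 1) :
    FareyAdj d ((x : ℂ) : OnePoint ℂ) ((y : ℂ) : OnePoint ℂ) := by
  refine ⟨p₁, q₁, p₂, q₂, h₁, h₂, h₃, h₄, c₁, c₂, ?_, ?_, ?_⟩
  · rw [divC, if_neg hq₁]
    exact congrArg _ ((eq_div_iff hq₁).mpr hx)
  · rw [divC, if_neg hq₂]
    exact congrArg _ ((eq_div_iff hq₂).mpr hy)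
  · exact habs

lemma abs_one_of {w : ℂ} (h : w = 1 ∨ w = -1) : ‖w‖ = 1 := by
  rcases h with h | h <;> rw [h]
  · simp
  · rw [show (-1 : ℂ) = -(1 : ℂ) by ring, norm_neg]; simp

lemma adj_unit {d : ℕ} {t : ℂ} (ht : t ∈ ringInt d) :
    FareyAdj d ((t : ℂ) : OnePoint ℂ) (((t + 1 : ℂ)) : OnePoint ℂ) :=
  fareyAdj_of ht (one_mem_ringInt d) (ringInt_add ht (one_mem_ringInt d)) (one_mem_ringInt d)
    ⟨0, 1, zero_mem_ringInt d, one_mem_ringInt d, by ring⟩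
    ⟨0, 1, zero_mem_ringInt d, one_mem_ringInt d, by ring⟩
    one_ne_zero one_ne_zero (mul_one t) (mul_one _) (abs_one_of (Or.inr (by ring)))

lemma adj_translate {d : ℕ} {e f : ℤ} (hω : omegaD d ^ 2 = (e : ℂ) + (f : ℂ) * omegaD d)
    {t x y : ℂ} (ht : t ∈ ringInt d)
    (h : FareyAdj d ((x : ℂ) : OnePoint ℂ) ((y : ℂ) : OnePoint ℂ)) :
    FareyAdj d (((x + t : ℂ)) : OnePoint ℂ) (((y + t : ℂ)) : OnePoint ℂ) := by
  obtain ⟨p₁, q₁, p₂, q₂, h₁, h₂, h₃, h₄, ⟨u₁, v₁, hu₁, hv₁, he₁⟩, ⟨u₂, v₂, hu₂, hv₂, he₂⟩,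
    hx, hy, habs⟩ := h
  have hq₁ : q₁ ≠ 0 := by
    rintro rfl
    rw [divC, if_pos rfl] at hx
    exact OnePoint.coe_ne_infty x hx
  have hq₂ : q₂ ≠ 0 := by
    rintro rfl
    rw [divC, if_pos rfl] at hy
    exact OnePoint.coe_ne_infty y hy
  rw [divC, if_neg hq₁] at hx
  rw [divC, if_neg hq₂] at hy
  have hx' : x = p₁ / q₁ := OnePoint.coe_eq_coe.mp hx
  have hy' : y = p₂ / q₂ := OnePoint.coe_eq_coe.mp hy
  have hx1 : x * q₁ = p₁ := by rw [hx']; field_simp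
  have hy1 : y * q₂ = p₂ := by rw [hy']; field_simp
  refine fareyAdj_of (ringInt_add h₁ (ringInt_mul hω ht h₂)) h₂
    (ringInt_add h₃ (ringInt_mul hω ht h₄)) h₄
    ⟨u₁, v₁ + -(u₁ * t), hu₁, ringInt_add hv₁ (ringInt_neg (ringInt_mul hω hu₁ ht)),
      by linear_combination he₁⟩
    ⟨u₂, v₂ + -(u₂ * t), hu₂, ringInt_add hv₂ (ringInt_neg (ringInt_mul hω hu₂ ht)),
      by linear_combination he₂⟩
    hq₁ hq₂ (by linear_combination hx1) (by linear_combination hy1) ?_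
  rw [show (p₁ + t * q₁) * q₂ - (p₂ + t * q₂) * q₁ = p₁ * q₂ - p₂ * q₁ by ring]
  exact habs

end Aux2
section SeedHelpers

lemma two_mem_ringInt (d : ℕ) : (2 : ℂ) ∈ ringInt d :=
  mem_ringInt' 2 0 (by push_cast; ring)

lemma one_sub_omega_mem (d : ℕ) : (1 : ℂ) - omegaD d ∈ ringInt d :=
  mem_ringInt' 1 (-1) (by push_cast; ring)

lemma omega_sub_one_mem (d : ℕ) : omegaD d - 1 ∈ ringInt d :=
  mem_ringInt' (-1) 1 (by push_cast; ring)

lemma neg_omega_mem (d : ℕ) : -omegaD d ∈ ringInt d :=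
  mem_ringInt' 0 (-1) (by push_cast; ring)

end SeedHelpers

section Seeds

/- ### d = 2 seeds -/

lemma adj2_zero_half :
    FareyAdj 2 (((0 : ℂ)) : OnePoint ℂ) (((omegaD 2 / 2 : ℂ)) : OnePoint ℂ) :=
  fareyAdj_of (zero_mem_ringInt 2) (one_mem_ringInt 2) (neg_one_mem_ringInt 2)
    (omega_mem_ringInt 2)
    ⟨0, 1, zero_mem_ringInt 2, one_mem_ringInt 2, by ring⟩
    ⟨-1, 0, neg_one_mem_ringInt 2, zero_mem_ringInt 2, by ring⟩
    one_ne_zero omega2_ne_zero (by ring)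
    (by linear_combination omega_sq2 / 2)
    (abs_one_of (Or.inl (by ring)))

lemma adj2_half_omega :
    FareyAdj 2 (((omegaD 2 / 2 : ℂ)) : OnePoint ℂ) (((omegaD 2 : ℂ)) : OnePoint ℂ) :=
  fareyAdj_of (neg_one_mem_ringInt 2) (omega_mem_ringInt 2) (omega_mem_ringInt 2)
    (one_mem_ringInt 2)
    ⟨-1, 0, neg_one_mem_ringInt 2, zero_mem_ringInt 2, by ring⟩
    ⟨0, 1, zero_mem_ringInt 2, one_mem_ringInt 2, by ring⟩
    omega2_ne_zero one_ne_zero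
    (by linear_combination omega_sq2 / 2) (mul_one _)
    (abs_one_of (Or.inl (by linear_combination -omega_sq2)))

/- ### d = 7 seeds -/

lemma adj7_zero_half :
    FareyAdj 7 (((0 : ℂ)) : OnePoint ℂ) (((omegaD 7 / 2 : ℂ)) : OnePoint ℂ) :=
  fareyAdj_of (zero_mem_ringInt 7) (one_mem_ringInt 7) (one_mem_ringInt 7)
    (one_sub_omega_mem _)
    ⟨0, 1, zero_mem_ringInt 7, one_mem_ringInt 7, by ring⟩
    ⟨1, 0, one_mem_ringInt 7, zero_mem_ringInt 7, by ring⟩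
    one_ne_zero one_sub_omega7_ne_zero (by ring)
    (by linear_combination (-1/2 : ℂ) * omega_sq7)
    (abs_one_of (Or.inr (by ring)))

lemma adj7_half_omega :
    FareyAdj 7 (((omegaD 7 / 2 : ℂ)) : OnePoint ℂ) (((omegaD 7 : ℂ)) : OnePoint ℂ) :=
  fareyAdj_of (one_mem_ringInt 7) (one_sub_omega_mem _)
    (omega_mem_ringInt 7) (one_mem_ringInt 7)
    ⟨1, 0, one_mem_ringInt 7, zero_mem_ringInt 7, by ring⟩
    ⟨0, 1, zero_mem_ringInt 7, one_mem_ringInt 7, by ring⟩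
    one_sub_omega7_ne_zero one_ne_zero
    (by linear_combination (-1/2 : ℂ) * omega_sq7) (mul_one _)
    (abs_one_of (Or.inr (by linear_combination omega_sq7)))

/- ### d = 11 seeds -/

lemma adj11_zero_third :
    FareyAdj 11 (((0 : ℂ)) : OnePoint ℂ) (((omegaD 11 / 3 : ℂ)) : OnePoint ℂ) :=
  fareyAdj_of (zero_mem_ringInt 11) (one_mem_ringInt 11) (one_mem_ringInt 11)
    (one_sub_omega_mem _)
    ⟨0, 1, zero_mem_ringInt 11, one_mem_ringInt 11, by ring⟩
    ⟨1, 0, one_mem_ringInt 11, zero_mem_ringInt 11, by ring⟩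
    one_ne_zero one_sub_omega11_ne_zero (by ring)
    (by linear_combination (-1/3 : ℂ) * omega_sq11)
    (abs_one_of (Or.inr (by ring)))

lemma adj11_third_half :
    FareyAdj 11 (((omegaD 11 / 3 : ℂ)) : OnePoint ℂ) (((omegaD 11 / 2 : ℂ)) : OnePoint ℂ) :=
  fareyAdj_of (one_mem_ringInt 11) (one_sub_omega_mem _)
    (omega_mem_ringInt 11) (two_mem_ringInt _)
    ⟨1, 0, one_mem_ringInt 11, zero_mem_ringInt 11, by ring⟩
    ⟨omegaD 11 - 1, 2, omega_sub_one_mem 11,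
      two_mem_ringInt 11, by linear_combination omega_sq11⟩
    one_sub_omega11_ne_zero two_ne_zero
    (by linear_combination (-1/3 : ℂ) * omega_sq11)
    (by ring)
    (abs_one_of (Or.inr (by linear_combination omega_sq11)))

lemma adj11_half_twothird :
    FareyAdj 11 (((omegaD 11 / 2 : ℂ)) : OnePoint ℂ)
      (((2 * omegaD 11 / 3 : ℂ)) : OnePoint ℂ) :=
  fareyAdj_of (omega_mem_ringInt 11) (two_mem_ringInt _)
    (two_mem_ringInt _) (one_sub_omega_mem _)
    ⟨omegaD 11 - 1, 2, omega_sub_one_mem 11,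
      two_mem_ringInt 11, by linear_combination omega_sq11⟩
    ⟨2, -omegaD 11, two_mem_ringInt 11,
      neg_omega_mem 11, by linear_combination omega_sq11⟩
    two_ne_zero one_sub_omega11_ne_zero
    (by ring)
    (by linear_combination (-2/3 : ℂ) * omega_sq11)
    (abs_one_of (Or.inr (by linear_combination -omega_sq11)))

lemma adj11_twothird_omega :
    FareyAdj 11 (((2 * omegaD 11 / 3 : ℂ)) : OnePoint ℂ) (((omegaD 11 : ℂ)) : OnePoint ℂ) :=
  fareyAdj_of (two_mem_ringInt _) (one_sub_omega_mem _)
    (omega_mem_ringInt 11) (one_mem_ringInt 11)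
    ⟨2, -omegaD 11, two_mem_ringInt 11,
      neg_omega_mem 11, by linear_combination omega_sq11⟩
    ⟨0, 1, zero_mem_ringInt 11, one_mem_ringInt 11, by ring⟩
    one_sub_omega11_ne_zero one_ne_zero
    (by linear_combination (-2/3 : ℂ) * omega_sq11) (mul_one _)
    (abs_one_of (Or.inr (by linear_combination omega_sq11)))

end Seeds
section Steps

/-- Translate a seed adjacency to a one-edge `Conn`. -/
lemma Conn.of_adj_translate {d : ℕ} {e f : ℤ}
    (hω : omegaD d ^ 2 = (e : ℂ) + (f : ℂ) * omegaD d) {x y t : ℂ} (ht : t ∈ ringInt d)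
    (hadj : FareyAdj d ((x : ℂ) : OnePoint ℂ) ((y : ℂ) : OnePoint ℂ))
    (hx : x + t ∈ Gset d) (hy : y + t ∈ Gset d) : Conn d (x + t) (y + t) :=
  Conn.single hx hy (adj_translate hω ht hadj)

lemma conn_unit {d : ℕ} {t : ℂ} (ht : t ∈ ringInt d) : Conn d t (t + 1) :=
  Conn.single (mem_Gset_of_ringInt ht)
    (mem_Gset_of_ringInt (ringInt_add ht (one_mem_ringInt d))) (adj_unit ht)

lemma conn2_omega {t : ℂ} (ht : t ∈ ringInt 2) : Conn 2 (0 + t) (omegaD 2 + t) := by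
  have hhalf : omegaD 2 / 2 + t ∈ Gset 2 := mem_Gset_half (by norm_num) ht
  exact (Conn.of_adj_translate omega_sq2' ht adj2_zero_half
      (mem_Gset_of_ringInt (by simpa using ht)) hhalf).trans
    (Conn.of_adj_translate omega_sq2' ht adj2_half_omega hhalf
      (mem_Gset_of_ringInt (ringInt_add (omega_mem_ringInt 2) ht)))

lemma conn2_half {t : ℂ} (ht : t ∈ ringInt 2) : Conn 2 (0 + t) (omegaD 2 / 2 + t) :=
  Conn.of_adj_translate omega_sq2' ht adj2_zero_half
    (mem_Gset_of_ringInt (by simpa using ht)) (mem_Gset_half (by norm_num) ht)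

lemma conn7_omega {t : ℂ} (ht : t ∈ ringInt 7) : Conn 7 (0 + t) (omegaD 7 + t) := by
  have hhalf : omegaD 7 / 2 + t ∈ Gset 7 := mem_Gset_half (by norm_num) ht
  exact (Conn.of_adj_translate omega_sq7' ht adj7_zero_half
      (mem_Gset_of_ringInt (by simpa using ht)) hhalf).trans
    (Conn.of_adj_translate omega_sq7' ht adj7_half_omega hhalf
      (mem_Gset_of_ringInt (ringInt_add (omega_mem_ringInt 7) ht)))

lemma conn7_half {t : ℂ} (ht : t ∈ ringInt 7) : Conn 7 (0 + t) (omegaD 7 / 2 + t) :=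
  Conn.of_adj_translate omega_sq7' ht adj7_zero_half
    (mem_Gset_of_ringInt (by simpa using ht)) (mem_Gset_half (by norm_num) ht)

lemma conn11_third {t : ℂ} (ht : t ∈ ringInt 11) : Conn 11 (0 + t) (omegaD 11 / 3 + t) :=
  Conn.of_adj_translate omega_sq11' ht adj11_zero_third
    (mem_Gset_of_ringInt (by simpa using ht)) (mem_Gset11_third ht)

lemma conn11_half {t : ℂ} (ht : t ∈ ringInt 11) : Conn 11 (0 + t) (omegaD 11 / 2 + t) :=
  (conn11_third ht).trans
    (Conn.of_adj_translate omega_sq11' ht adj11_third_half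
      (mem_Gset11_third ht) (mem_Gset11_half ht))

lemma conn11_twothird {t : ℂ} (ht : t ∈ ringInt 11) :
    Conn 11 (0 + t) (2 * omegaD 11 / 3 + t) :=
  (conn11_half ht).trans
    (Conn.of_adj_translate omega_sq11' ht adj11_half_twothird
      (mem_Gset11_half ht) (mem_Gset11_twothird ht))

lemma conn11_omega {t : ℂ} (ht : t ∈ ringInt 11) : Conn 11 (0 + t) (omegaD 11 + t) :=
  (conn11_twothird ht).trans
    (Conn.of_adj_translate omega_sq11' ht adj11_twothird_omega
      (mem_Gset11_twothird ht) (mem_Gset_of_ringInt (ringInt_add (omega_mem_ringInt 11) ht)))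

end Steps

section RingZero

/-- From the two elementary moves, every ring element is connected to `0`. -/
lemma conn_ring_zero {d : ℕ}
    (hstep : ∀ t : ℂ, t ∈ ringInt d → Conn d (0 + t) (omegaD d + t)) :
    ∀ z ∈ ringInt d, Conn d z 0 := by
  have homega : ∀ b : ℤ, Conn d ((b : ℂ) * omegaD d) 0 := by
    intro b
    induction b using Int.induction_on with
    | zero => rw [Int.cast_zero, zero_mul]; exact Conn.refl (mem_Gset_of_ringInt (zero_mem_ringInt d))
    | succ n ih =>
        have ht : ((n : ℤ) : ℂ) * omegaD d ∈ ringInt d :=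
          mem_ringInt' 0 n (by push_cast; ring)
        have h1 := hstep _ ht
        rw [zero_add] at h1
        have e : ((n + 1 : ℤ) : ℂ) * omegaD d = omegaD d + ((n : ℤ) : ℂ) * omegaD d := by
          push_cast; ring
        rw [e]
        exact h1.symm.trans ih
    | pred n ih =>
        have ht : ((-n - 1 : ℤ) : ℂ) * omegaD d ∈ ringInt d :=
          mem_ringInt' 0 (-n - 1) (by push_cast; ring)
        have h1 := hstep _ ht
        rw [zero_add] at h1
        have e : omegaD d + ((-n - 1 : ℤ) : ℂ) * omegaD d = ((-n : ℤ) : ℂ) * omegaD d := by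
          push_cast; ring
        rw [e] at h1
        exact h1.trans ih
  rintro z ⟨a, b, rfl⟩
  induction a using Int.induction_on with
  | zero => rw [Int.cast_zero, zero_add]; exact homega b
  | succ n ih =>
      have ht : ((n : ℤ) : ℂ) + (b : ℂ) * omegaD d ∈ ringInt d := ⟨n, b, rfl⟩
      have h1 := conn_unit ht
      have e : ((n + 1 : ℤ) : ℂ) + (b : ℂ) * omegaD d
          = (((n : ℤ) : ℂ) + (b : ℂ) * omegaD d) + 1 := by push_cast; ring
      rw [e]
      exact h1.symm.trans ih
  | pred n ih =>
      have ht : ((-n - 1 : ℤ) : ℂ) + (b : ℂ) * omegaD d ∈ ringInt d := ⟨-n - 1, b, rfl⟩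
      have h1 := conn_unit ht
      have e : (((-n - 1 : ℤ) : ℂ) + (b : ℂ) * omegaD d) + 1
          = ((-n : ℤ) : ℂ) + (b : ℂ) * omegaD d := by push_cast; ring
      rw [e] at h1
      exact h1.trans ih

end RingZero

section Main

lemma conn_offset_zero {d : ℕ} {s t : ℂ}
    (hconn : Conn d (0 + t) (s + t))
    (hzero : ∀ z ∈ ringInt d, Conn d z 0) (ht : t ∈ ringInt d) :
    Conn d (s + t) 0 := by
  refine hconn.symm.trans ?_
  rw [zero_add]
  exact hzero t ht

lemma conn_to_zero2 : ∀ x ∈ Gset 2, Conn 2 x 0 := by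
  intro x hx
  have hzero := conn_ring_zero (d := 2) (fun t ht => conn2_omega ht)
  have hx' : x ∈ ringInt 2 ∨ x - omegaD 2 / 2 ∈ ringInt 2 := by
    have : Gset 2 = {z | z ∈ ringInt 2 ∨ z - omegaD 2 / 2 ∈ ringInt 2} := by
      unfold Gset; rw [if_neg (by norm_num)]
    rwa [this] at hx
  rcases hx' with h | h
  · exact hzero x h
  · have e : x = omegaD 2 / 2 + (x - omegaD 2 / 2) := by ring
    rw [e]
    exact conn_offset_zero (conn2_half h) hzero h

lemma conn_to_zero7 : ∀ x ∈ Gset 7, Conn 7 x 0 := by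
  intro x hx
  have hzero := conn_ring_zero (d := 7) (fun t ht => conn7_omega ht)
  have hx' : x ∈ ringInt 7 ∨ x - omegaD 7 / 2 ∈ ringInt 7 := by
    have : Gset 7 = {z | z ∈ ringInt 7 ∨ z - omegaD 7 / 2 ∈ ringInt 7} := by
      unfold Gset; rw [if_neg (by norm_num)]
    rwa [this] at hx
  rcases hx' with h | h
  · exact hzero x h
  · have e : x = omegaD 7 / 2 + (x - omegaD 7 / 2) := by ring
    rw [e]
    exact conn_offset_zero (conn7_half h) hzero h

lemma conn_to_zero11 : ∀ x ∈ Gset 11, Conn 11 x 0 := by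
  intro x hx
  have hzero := conn_ring_zero (d := 11) (fun t ht => conn11_omega ht)
  have hx' : x ∈ ringInt 11 ∨ x - omegaD 11 / 3 ∈ ringInt 11 ∨
      x - omegaD 11 / 2 ∈ ringInt 11 ∨ x - 2 * omegaD 11 / 3 ∈ ringInt 11 := by
    have : Gset 11 = {z | z ∈ ringInt 11 ∨ z - omegaD 11 / 3 ∈ ringInt 11 ∨
        z - omegaD 11 / 2 ∈ ringInt 11 ∨ z - 2 * omegaD 11 / 3 ∈ ringInt 11} := by
      unfold Gset; rw [if_pos rfl]
    rwa [this] at hx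
  rcases hx' with h | h | h | h
  · exact hzero x h
  · have e : x = omegaD 11 / 3 + (x - omegaD 11 / 3) := by ring
    rw [e]
    exact conn_offset_zero (conn11_third h) hzero h
  · have e : x = omegaD 11 / 2 + (x - omegaD 11 / 2) := by ring
    rw [e]
    exact conn_offset_zero (conn11_half h) hzero h
  · have e : x = 2 * omegaD 11 / 3 + (x - 2 * omegaD 11 / 3) := by ring
    rw [e]
    exact conn_offset_zero (conn11_twothird h) hzero h

end Main

/-- For `d ∈ {2,7,11}` the subgraph of the Farey graph `E_d`
induced on `G_d` is connected: any two elements of `G_d` are joined by a walk in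
`E_d` all of whose vertices belong to `G_d`. -/
theorem Gset_subgraph_connected (d : ℕ) (hd : d ∈ ({2, 7, 11} : Set ℕ))
    (x y : ℂ) (hx : x ∈ Gset d) (hy : y ∈ Gset d) :
    ∃ (n : ℕ) (f : ℕ → OnePoint ℂ), f 0 = ((x : ℂ) : OnePoint ℂ) ∧
      f n = ((y : ℂ) : OnePoint ℂ) ∧ IsWalk d n f ∧
      ∀ k ≤ n, ∃ z ∈ Gset d, f k = ((z : ℂ) : OnePoint ℂ) := by
  have hd' : d = 2 ∨ d = 7 ∨ d = 11 := by simpa using hd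
  rcases hd' with rfl | rfl | rfl
  · exact (conn_to_zero2 x hx).trans (conn_to_zero2 y hy).symm
  · exact (conn_to_zero7 x hx).trans (conn_to_zero7 y hy).symm
  · exact (conn_to_zero11 x hx).trans (conn_to_zero11 y hy).symm
end

section
/- Let d ∈ {1,2,3,7,11}, let β > 0 be real, and let a,b,c,e ∈ ℤ[ω_d] with b ≠ 0, e ≠ 0, a,b coprime, c,e coprime, and a/b ≠ c/e. Consider the generalized Ford spheres of size β for a/b and c/e: the Euclidean spheres in ℂ × ℝ with centers (a/b, β/(2|b|²)) and (c/e, β/(2|e|²)) and radii β/(2|b|²) and β/(2|e|²), respectively. These two spheres are tangent to each other (the Euclidean distance between their centers equals the sum of their radii) if and only if |ae − bc| = β, and they are disjoint (the distance between their centers exceeds the sum of their radii) if and only if |ae − bc| > β. -/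
/-- For `d ∈ {1,2,3,7,11}`, `β > 0`, and distinct points
`a/b ≠ c/e` of `ℚ(√(-d))` in coprime lowest terms, the generalized Ford spheres
of size `β` for `a/b` and `c/e` (Euclidean spheres in `ℂ × ℝ` with centers
`(a/b, β/(2|b|²))`, `(c/e, β/(2|e|²))` and radii `β/(2|b|²)`, `β/(2|e|²)`) are
tangent iff `|ae − bc| = β`, and disjoint iff `|ae − bc| > β`. -/
theorem ford_spheres_tangent_iff (d : ℕ) (hd : d ∈ ({1, 2, 3, 7, 11} : Set ℕ))
    (β : ℝ) (hβ : 0 < β) (a b c e : ℂ)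
    (ha : a ∈ ringInt d) (hb : b ∈ ringInt d) (hc : c ∈ ringInt d) (he : e ∈ ringInt d)
    (hb0 : b ≠ 0) (he0 : e ≠ 0)
    (hab : CoprimeIn d a b) (hce : CoprimeIn d c e) (hne : a / b ≠ c / e) :
    (Real.sqrt (‖a / b - c / e‖ ^ 2 +
          (β / (2 * ‖b‖ ^ 2) - β / (2 * ‖e‖ ^ 2)) ^ 2) =
        β / (2 * ‖b‖ ^ 2) + β / (2 * ‖e‖ ^ 2) ↔
      ‖a * e - b * c‖ = β) ∧
    (Real.sqrt (‖a / b - c / e‖ ^ 2 +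
          (β / (2 * ‖b‖ ^ 2) - β / (2 * ‖e‖ ^ 2)) ^ 2) >
        β / (2 * ‖b‖ ^ 2) + β / (2 * ‖e‖ ^ 2) ↔
      ‖a * e - b * c‖ > β) := by
  have hB : (0:ℝ) < ‖b‖ := norm_pos_iff.mpr hb0
  have hE : (0:ℝ) < ‖e‖ := norm_pos_iff.mpr he0
  have habs : ‖a/b - c/e‖
      = ‖a*e - b*c‖ / (‖b‖ * ‖e‖) := by
    rw [div_sub_div _ _ hb0 he0, norm_div, norm_mul]
  set M := ‖a*e - b*c‖ with hMdef
  have hM0 : 0 ≤ M := norm_nonneg _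
  set B := ‖b‖ with hBdef
  set E := ‖e‖ with hEdef
  set S : ℝ := β / (2*B^2) + β / (2*E^2) with hS
  have hS0 : 0 < S := by positivity
  have hX : ‖a/b - c/e‖^2 + (β/(2*B^2) - β/(2*E^2))^2
      = S^2 + (M^2 - β^2)/(B^2*E^2) := by
    rw [habs, hS]
    field_simp
    ring
  have hX0 : (0:ℝ) ≤ S^2 + (M^2 - β^2)/(B^2*E^2) := by
    rw [← hX]; positivity
  have key : ∀ x : ℝ, 0 ≤ x → ((x^2 - β^2)/(B^2*E^2) = 0 ↔ x = β) := by
    intro x hx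
    constructor
    · intro h
      have h2 : x^2 - β^2 = 0 := by
        rcases div_eq_zero_iff.mp h with h | h
        · exact h
        · exact absurd h (by positivity : (0:ℝ) < B^2*E^2).ne'
      have h3 : (x - β) * (x + β) = 0 := by linear_combination h2
      rcases mul_eq_zero.mp h3 with h4 | h4
      · linarith
      · linarith
    · intro h; rw [h]; simp
  constructor
  · rw [hX]
    constructor
    · intro h
      have h2 := Real.sq_sqrt hX0
      rw [h] at h2
      have h3 : (M^2 - β^2)/(B^2*E^2) = 0 := by nlinarith
      exact (key M hM0).mp h3
    · intro h
      rw [h]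
      have hz : (β^2 - β^2)/(B^2*E^2) = 0 := by simp
      rw [hz, add_zero, Real.sqrt_sq hS0.le]
  · rw [hX]
    have hlt : ∀ x : ℝ, S < Real.sqrt x ↔ S^2 < x := by
      intro x
      constructor
      · intro h
        have hx0 : 0 ≤ x := by
          by_contra hc2
          push_neg at hc2
          rw [Real.sqrt_eq_zero_of_nonpos hc2.le] at h
          linarith
        have := Real.sq_sqrt hx0
        nlinarith [Real.sqrt_nonneg x]
      · intro h
        have := Real.lt_sqrt hS0.le (y := x)
        exact this.mpr h
    rw [gt_iff_lt, hlt]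
    constructor
    · intro h
      have hpos : (0:ℝ) < B^2*E^2 := by positivity
      have h1 : 0 < (M^2 - β^2)/(B^2*E^2) := by linarith
      have h2 : 0 < M^2 - β^2 := by
        rcases div_pos_iff.mp h1 with ⟨h3, _⟩ | ⟨_, h4⟩
        · exact h3
        · linarith
      nlinarith
    · intro h
      have h2 : β^2 < M^2 := by nlinarith
      have : 0 < (M^2 - β^2)/(B^2*E^2) := div_pos (by linarith) (by positivity)
      linarith
end

section
/- Fix d ∈ {1,2,3,7,11} and let L ⊂ ℂ be a wall line, i.e., one of the lines ℝ, ℝ + ω_d, ℝ·ω_d, ℝ·ω_d + 1 if d ∈ {1,2}, or one of the lines ℝ, ℝ·ω_d, and the line through 1 and ω_d if d ∈ {3,7,11}. Let p₁,q₁,p₂,q₂ ∈ ℤ[ω_d] with p₁,q₁ coprime, p₂,q₂ coprime, q₁ ≠ 0, q₂ ≠ 0, and |p₁q₂ − p₂q₁| < 2·Im(ω_d)/|ω_d|. Then p₁/q₁ and p₂/q₂ lie in one common closed half-plane of ℂ bounded by L; consequently the hyperbolic geodesic of the upper half-space with endpoints p₁/q₁ and p₂/q₂ cannot cross the wall L ×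 ℝ₊. -/
/-- The hyperbolic geodesic of the upper half-space `ℂ × ℝ₊` with distinct
finite endpoints `α, β ∈ ℂ`: the open Euclidean semicircle above the segment
from `α` to `β`. -/
def geoSet (α β : ℂ) : Set (ℂ × ℝ) :=
  {w | 0 < w.2 ∧ (∃ s : ℝ, 0 < s ∧ s < 1 ∧ w.1 = (1 - (s : ℂ)) * α + (s : ℂ) * β) ∧
    ‖w.1 - (α + β) / 2‖ ^ 2 + w.2 ^ 2 = ‖α - β‖ ^ 2 / 4}

/-- The wall lines of the fundamental polygon, each given by a base point `z₀`
and a direction `v`, the line being `{z₀ + r·v : r ∈ ℝ}`: the lines `ℝ`,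
`ℝ + ω_d`, `ℝ·ω_d`, `ℝ·ω_d + 1` for `d ∈ {1,2}`, and the lines `ℝ`, `ℝ·ω_d`
and the line through `1` and `ω_d` for `d ∈ {3,7,11}`. -/
def wallParams (d : ℕ) : Set (ℂ × ℂ) :=
  if d % 4 = 3 then {((0 : ℂ), (1 : ℂ)), (0, omegaD d), (1, omegaD d - 1)}
  else {((0 : ℂ), (1 : ℂ)), (omegaD d, 1), (0, omegaD d), (1, omegaD d)}


section AuxGeodesicWall

private lemma riMem_add {d} {z w : ℂ} (hz : z ∈ ringInt d) (hw : w ∈ ringInt d) :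
    z + w ∈ ringInt d := by
  obtain ⟨a,b,rfl⟩ := hz; obtain ⟨c,e,rfl⟩ := hw
  exact ⟨a+c, b+e, by push_cast; ring⟩

private lemma riMem_neg {d} {z : ℂ} (hz : z ∈ ringInt d) : -z ∈ ringInt d := by
  obtain ⟨a,b,rfl⟩ := hz; exact ⟨-a,-b, by push_cast; ring⟩

private lemma riMem_sub {d} {z w : ℂ} (hz : z ∈ ringInt d) (hw : w ∈ ringInt d) :
    z - w ∈ ringInt d := by
  rw [sub_eq_add_neg]; exact riMem_add hz (riMem_neg hw)

private lemma riMem_mul {d} (hsq : omegaD d * omegaD d ∈ ringInt d) {z w : ℂ}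
    (hz : z ∈ ringInt d) (hw : w ∈ ringInt d) : z * w ∈ ringInt d := by
  obtain ⟨t,s,ht⟩ := hsq
  obtain ⟨a,b,rfl⟩ := hz; obtain ⟨c,e,rfl⟩ := hw
  refine ⟨a*c + b*e*t, a*e + b*c + b*e*s, ?_⟩
  have h : ((a:ℂ)+b*omegaD d) * ((c:ℂ) + e*omegaD d)
      = a*c + ((a*e:ℤ):ℂ)*omegaD d + ((b*c:ℤ):ℂ)*omegaD d + ((b*e:ℤ):ℂ)*(omegaD d * omegaD d) := by
    push_cast; ring
  rw [h, ht]; push_cast; ring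

private lemma riMem_conj {d} (hconj : (starRingEnd ℂ) (omegaD d) ∈ ringInt d) {z : ℂ}
    (hz : z ∈ ringInt d) : (starRingEnd ℂ) z ∈ ringInt d := by
  obtain ⟨c,e,hce⟩ := hconj
  obtain ⟨a,b,rfl⟩ := hz
  refine ⟨a + b*c, b*e, ?_⟩
  rw [map_add, map_mul, map_intCast, map_intCast, hce]
  push_cast; ring

private lemma riIm_int {d} {z : ℂ} (hz : z ∈ ringInt d) :
    ∃ n : ℤ, z.im = n * (omegaD d).im := by
  obtain ⟨a,b,rfl⟩ := hz
  exact ⟨b, by simp⟩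

private lemma riKey {d} (hI : 0 < (omegaD d).im)
    (hsq : omegaD d * omegaD d ∈ ringInt d)
    (hconj : (starRingEnd ℂ) (omegaD d) ∈ ringInt d)
    {P Q : ℂ} (hP : P ∈ ringInt d) (hQ : Q ∈ ringInt d)
    (hpos : 0 < (P / Q).im) :
    (omegaD d).im ≤ (P / Q).im * ‖Q‖ ^ 2 := by
  have hQ0 : Q ≠ 0 := by rintro rfl; simp at hpos
  obtain ⟨n, hn⟩ := riIm_int (riMem_mul hsq hP (riMem_conj hconj hQ))
  have hns : (0:ℝ) < Complex.normSq Q := Complex.normSq_pos.mpr hQ0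
  have him : (P/Q).im = (P * (starRingEnd ℂ) Q).im / Complex.normSq Q := by
    rw [Complex.div_im, Complex.mul_im, Complex.conj_re, Complex.conj_im, Complex.normSq_apply]
    ring
  rw [him, hn] at hpos ⊢
  rw [Complex.sq_norm, div_mul_cancel₀ _ (ne_of_gt hns)]
  have h0 : (0:ℝ) < n * (omegaD d).im := by
    have := mul_pos hpos hns
    rwa [div_mul_cancel₀ _ (ne_of_gt hns)] at this
  have hn0 : 0 < n := by
    by_contra h
    push_neg at h
    have : (n:ℝ) ≤ 0 := by exact_mod_cast h
    nlinarith
  have hn1 : (1:ℝ) ≤ (n:ℝ) := by exact_mod_cast hn0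
  nlinarith

private lemma geo_nonneg (z₀ v α β : ℂ) (hα : 0 ≤ ((α - z₀)/v).im)
    (hβ : 0 ≤ ((β - z₀)/v).im) :
    ∀ w ∈ geoSet α β, 0 ≤ ((w.1 - z₀)/v).im := by
  rintro w ⟨-, ⟨s, hs0, hs1, hw1⟩, -⟩
  have h : (w.1 - z₀)/v = ((1-s:ℝ):ℂ) * ((α - z₀)/v) + ((s:ℝ):ℂ) * ((β - z₀)/v) := by
    rw [hw1]; push_cast; ring
  rw [h, Complex.add_im, Complex.im_ofReal_mul, Complex.im_ofReal_mul]
  have := add_nonneg (mul_nonneg (by linarith : (0:ℝ) ≤ 1-s) hα) (mul_nonneg hs0.le hβ)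
  linarith

private lemma geo_nonpos (z₀ v α β : ℂ) (hα : ((α - z₀)/v).im ≤ 0)
    (hβ : ((β - z₀)/v).im ≤ 0) :
    ∀ w ∈ geoSet α β, ((w.1 - z₀)/v).im ≤ 0 := by
  intro w hw
  have h := geo_nonneg z₀ (-v) α β (by rw [div_neg, Complex.neg_im]; linarith)
    (by rw [div_neg, Complex.neg_im]; linarith) w hw
  rw [div_neg, Complex.neg_im] at h; linarith

private lemma no_cross {d} (hI : 0 < (omegaD d).im)
    (hsq : omegaD d * omegaD d ∈ ringInt d)
    (hconj : (starRingEnd ℂ) (omegaD d) ∈ ringInt d)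
    {z₀ v p₁ q₁ p₂ q₂ : ℂ}
    (hz₀ : z₀ ∈ ringInt d) (hv : v ∈ ringInt d) (hv0 : v ≠ 0)
    (hvA : ‖v‖ ≤ ‖omegaD d‖)
    (hp₁ : p₁ ∈ ringInt d) (hq₁ : q₁ ∈ ringInt d)
    (hp₂ : p₂ ∈ ringInt d) (hq₂ : q₂ ∈ ringInt d)
    (hq₁0 : q₁ ≠ 0) (hq₂0 : q₂ ≠ 0)
    (hdet : ‖p₁ * q₂ - p₂ * q₁‖ <
      2 * (omegaD d).im / ‖omegaD d‖)
    (h1 : 0 < ((p₁/q₁ - z₀)/v).im) (h2 : ((p₂/q₂ - z₀)/v).im < 0) : False := by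
  set I := (omegaD d).im with hIdef
  set V := ‖v‖ with hVdef
  set x := ‖q₁‖ with hxdef
  set y := ‖q₂‖ with hydef
  set A := ‖omegaD d‖ with hAdef
  have hV : 0 < V := by simpa [hVdef] using norm_pos_iff.mpr hv0
  have hx : 0 < x := by simpa [hxdef] using norm_pos_iff.mpr hq₁0
  have hy : 0 < y := by simpa [hydef] using norm_pos_iff.mpr hq₂0
  have hA : 0 < A := lt_of_lt_of_le hV hvA
  have e1 : (p₁/q₁ - z₀)/v = (p₁ - z₀*q₁)/(v*q₁) := by
    field_simp
  have e2 : (p₂/q₂ - z₀)/v = (p₂ - z₀*q₂)/(v*q₂) := by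
    field_simp
  have k1 := riKey hI hsq hconj (riMem_sub hp₁ (riMem_mul hsq hz₀ hq₁))
    (riMem_mul hsq hv hq₁) (by rw [← e1]; exact h1)
  rw [← e1] at k1
  have k2 := riKey hI hsq hconj (riMem_neg (riMem_sub hp₂ (riMem_mul hsq hz₀ hq₂)))
    (riMem_mul hsq hv hq₂) (by rw [neg_div, Complex.neg_im, ← e2]; linarith)
  rw [neg_div, Complex.neg_im, ← e2] at k2
  rw [norm_mul, ← hVdef, ← hxdef] at k1
  rw [norm_mul, ← hVdef, ← hydef] at k2
  have e3 : (p₁/q₁ - z₀)/v - (p₂/q₂ - z₀)/v = (p₁*q₂ - p₂*q₁)/(q₁*q₂*v) := by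
    field_simp; ring
  have e5 : ((p₁/q₁ - z₀)/v).im - ((p₂/q₂ - z₀)/v).im
      ≤ ‖p₁*q₂ - p₂*q₁‖ / (x*y*V) := by
    rw [← Complex.sub_im, e3]
    calc ((p₁*q₂ - p₂*q₁)/(q₁*q₂*v)).im
        ≤ |((p₁*q₂ - p₂*q₁)/(q₁*q₂*v)).im| := le_abs_self _
      _ ≤ ‖(p₁*q₂ - p₂*q₁)/(q₁*q₂*v)‖ := Complex.abs_im_le_norm _
      _ = ‖p₁*q₂ - p₂*q₁‖ / (x*y*V) := by rw [norm_div, norm_mul, norm_mul]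
  have hdetV : ‖p₁*q₂ - p₂*q₁‖ * V < 2 * I := by
    have h' : ‖p₁*q₂ - p₂*q₁‖ * A < 2 * I := by
      rw [lt_div_iff₀ hA] at hdet; linarith
    nlinarith [norm_nonneg (p₁*q₂ - p₂*q₁)]
  set f₁ := ((p₁/q₁ - z₀)/v).im
  set f₂ := ((p₂/q₂ - z₀)/v).im
  have h6 : (f₁ - f₂) * (x*y*V) ≤ ‖p₁*q₂ - p₂*q₁‖ := by
    rw [← le_div_iff₀ (by positivity)]; exact e5
  have h7 : (f₁ - f₂) * (x*y*V) * V < 2 * I := by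
    calc (f₁ - f₂) * (x*y*V) * V ≤ ‖p₁*q₂ - p₂*q₁‖ * V :=
          mul_le_mul_of_nonneg_right h6 hV.le
      _ < 2 * I := hdetV
  have A1 : I * y^2 ≤ f₁ * (V*x)^2 * y^2 := mul_le_mul_of_nonneg_right k1 (sq_nonneg y)
  have A2 : I * x^2 ≤ -f₂ * (V*y)^2 * x^2 := mul_le_mul_of_nonneg_right k2 (sq_nonneg x)
  have A3 : (f₁ - f₂) * (x*y*V) * V * (x*y) < 2 * I * (x*y) :=
    mul_lt_mul_of_pos_right h7 (by positivity)
  nlinarith [sq_nonneg (x - y), mul_pos hx hy, hI]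

private lemma main_lemma (d : ℕ) (z₀ v : ℂ)
    (hI : 0 < (omegaD d).im)
    (hsq : omegaD d * omegaD d ∈ ringInt d)
    (hconj : (starRingEnd ℂ) (omegaD d) ∈ ringInt d)
    (hz₀ : z₀ ∈ ringInt d) (hv : v ∈ ringInt d) (hv0 : v ≠ 0)
    (hvA : ‖v‖ ≤ ‖omegaD d‖)
    (p₁ q₁ p₂ q₂ : ℂ)
    (hp₁ : p₁ ∈ ringInt d) (hq₁ : q₁ ∈ ringInt d)
    (hp₂ : p₂ ∈ ringInt d) (hq₂ : q₂ ∈ ringInt d)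
    (hq₁0 : q₁ ≠ 0) (hq₂0 : q₂ ≠ 0)
    (hdet : ‖p₁ * q₂ - p₂ * q₁‖ <
      2 * (omegaD d).im / ‖omegaD d‖) :
    (0 ≤ ((p₁ / q₁ - z₀) / v).im ∧ 0 ≤ ((p₂ / q₂ - z₀) / v).im ∧
      ∀ w ∈ geoSet (p₁ / q₁) (p₂ / q₂), 0 ≤ ((w.1 - z₀) / v).im) ∨
    (((p₁ / q₁ - z₀) / v).im ≤ 0 ∧ ((p₂ / q₂ - z₀) / v).im ≤ 0 ∧
      ∀ w ∈ geoSet (p₁ / q₁) (p₂ / q₂), ((w.1 - z₀) / v).im ≤ 0) := by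
  have hdet' : ‖p₂ * q₁ - p₁ * q₂‖ <
      2 * (omegaD d).im / ‖omegaD d‖ := by
    rwa [norm_sub_rev]
  rcases le_or_gt 0 (((p₁ / q₁ - z₀) / v).im) with h1 | h1
  · rcases le_or_gt 0 (((p₂ / q₂ - z₀) / v).im) with h2 | h2
    · exact Or.inl ⟨h1, h2, geo_nonneg z₀ v _ _ h1 h2⟩
    · rcases h1.eq_or_lt with he | hp
      · exact Or.inr ⟨le_of_eq he.symm, h2.le,
          geo_nonpos z₀ v _ _ (le_of_eq he.symm) h2.le⟩
      · exact (no_cross hI hsq hconj hz₀ hv hv0 hvA hp₁ hq₁ hp₂ hq₂ hq₁0 hq₂0 hdet hp h2).elim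
  · rcases le_or_gt (((p₂ / q₂ - z₀) / v).im) 0 with h2 | h2
    · exact Or.inr ⟨h1.le, h2, geo_nonpos z₀ v _ _ h1.le h2⟩
    · exact (no_cross hI hsq hconj hz₀ hv hv0 hvA hp₂ hq₂ hp₁ hq₁ hq₂0 hq₁0 hdet' h2 h1).elim

private lemma facts_ne3 (d : ℕ) (hd4 : d % 4 ≠ 3) (hd1 : 1 ≤ d) :
    0 < (omegaD d).im ∧ omegaD d * omegaD d ∈ ringInt d ∧
    (starRingEnd ℂ) (omegaD d) ∈ ringInt d ∧ 1 ≤ ‖omegaD d‖ := by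
  have hω : omegaD d = Complex.I * Real.sqrt d := by simp [omegaD, hd4]
  have hsd : Real.sqrt d * Real.sqrt d = (d:ℝ) := Real.mul_self_sqrt (Nat.cast_nonneg d)
  have hc : (Real.sqrt d : ℂ) * (Real.sqrt d : ℂ) = (d:ℂ) := by exact_mod_cast hsd
  have h1 : (1:ℝ) ≤ Real.sqrt d := by
    rw [show (1:ℝ) = Real.sqrt 1 by simp]
    exact Real.sqrt_le_sqrt (by exact_mod_cast hd1)
  refine ⟨?_, ⟨-(d:ℤ), 0, ?_⟩, ⟨0, -1, ?_⟩, ?_⟩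
  · rw [hω]; simp; linarith
  · rw [hω, show Complex.I * (Real.sqrt d:ℂ) * (Complex.I * (Real.sqrt d:ℂ))
        = (Complex.I * Complex.I) * ((Real.sqrt d:ℂ) * (Real.sqrt d:ℂ)) by ring,
      Complex.I_mul_I, hc]
    push_cast; ring
  · rw [hω, map_mul, Complex.conj_I, Complex.conj_ofReal]
    push_cast; ring
  · rw [hω, norm_mul, Complex.norm_I, one_mul,
      Complex.norm_of_nonneg (Real.sqrt_nonneg _)]
    exact h1

private lemma facts_3 (d : ℕ) (hd4 : d % 4 = 3) :
    0 < (omegaD d).im ∧ omegaD d * omegaD d ∈ ringInt d ∧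
    (starRingEnd ℂ) (omegaD d) ∈ ringInt d ∧ 1 ≤ ‖omegaD d‖ ∧
    ‖omegaD d - 1‖ = ‖omegaD d‖ := by
  obtain ⟨k, rfl⟩ : ∃ k : ℕ, d = 4*k + 3 := ⟨d/4, by omega⟩
  set d := 4*k+3 with hddef
  have hω : omegaD d = (1 + Complex.I * Real.sqrt d) / 2 := by simp [omegaD, hd4]
  have hsd : Real.sqrt d * Real.sqrt d = (d:ℝ) := Real.mul_self_sqrt (Nat.cast_nonneg d)
  have hc : (Real.sqrt d : ℂ) * (Real.sqrt d : ℂ) = (d:ℂ) := by exact_mod_cast hsd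
  have hsd1 : (1:ℝ) ≤ Real.sqrt d := by
    rw [show (1:ℝ) = Real.sqrt 1 by simp]
    exact Real.sqrt_le_sqrt (by rw [hddef]; push_cast; linarith)
  have him : (omegaD d).im = Real.sqrt d / 2 := by rw [hω]; simp
  have hre : (omegaD d).re = 1 / 2 := by rw [hω]; simp
  refine ⟨?_, ⟨-(k+1 : ℤ), 1, ?_⟩, ⟨1, -1, ?_⟩, ?_, ?_⟩
  · rw [him]; linarith
  · rw [hω]
    have hI2 : Complex.I * Complex.I = -1 := Complex.I_mul_I
    have hc2 : (Real.sqrt d : ℂ) * (Real.sqrt d : ℂ) = 4*(k:ℂ)+3 := by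
      rw [hc, hddef]; push_cast; ring
    rw [Int.cast_neg, Int.cast_add, Int.cast_one, Int.cast_natCast]
    linear_combination ((Real.sqrt d : ℂ) * (Real.sqrt d : ℂ)/4) * hI2 + (-1/4 : ℂ) * hc2
  · have hcj : (starRingEnd ℂ) ((1 + Complex.I * (Real.sqrt d : ℂ))/2)
        = (1 - Complex.I * (Real.sqrt d : ℂ))/2 := by
      rw [map_div₀, map_add, map_one, map_mul, Complex.conj_I, Complex.conj_ofReal, map_ofNat]
      ring
    rw [hω, hcj, ← hω]
    rw [hω]; push_cast; ring
  · have hsq : (1:ℝ) ≤ ‖omegaD d‖ ^ 2 := by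
      rw [Complex.sq_norm, Complex.normSq_apply, hre, him]
      have : (0:ℝ) ≤ (d:ℝ) := Nat.cast_nonneg d
      have hd3 : (3:ℝ) ≤ (d:ℝ) := by rw [hddef]; push_cast; linarith
      nlinarith
    nlinarith [norm_nonneg (omegaD d)]
  · rw [Complex.norm_def, Complex.norm_def]
    congr 1
    rw [Complex.normSq_apply, Complex.normSq_apply, Complex.sub_re, Complex.sub_im,
      Complex.one_re, Complex.one_im, hre, him]
    ring

end AuxGeodesicWall


/-- For `d ∈ {1,2,3,7,11}`, a wall line `L = z₀ + ℝ·v`, and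
points `p₁/q₁, p₂/q₂ ∈ ℚ(√(-d))` in coprime lowest terms with
`|p₁q₂ − p₂q₁| < 2·Im(ω_d)/|ω_d|`, the two points lie in a common closed
half-plane bounded by `L`; consequently the hyperbolic geodesic with endpoints
`p₁/q₁` and `p₂/q₂` cannot cross the wall `L × ℝ₊`. -/
theorem geodesic_cannot_cross_wall (d : ℕ) (hd : d ∈ ({1, 2, 3, 7, 11} : Set ℕ))
    (z₀ v : ℂ) (hw : (z₀, v) ∈ wallParams d)
    (p₁ q₁ p₂ q₂ : ℂ)
    (hp₁ : p₁ ∈ ringInt d) (hq₁ : q₁ ∈ ringInt d)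
    (hp₂ : p₂ ∈ ringInt d) (hq₂ : q₂ ∈ ringInt d)
    (hc₁ : CoprimeIn d p₁ q₁) (hc₂ : CoprimeIn d p₂ q₂)
    (hq₁0 : q₁ ≠ 0) (hq₂0 : q₂ ≠ 0)
    (hdet : ‖p₁ * q₂ - p₂ * q₁‖ <
      2 * (omegaD d).im / ‖omegaD d‖) :
    (0 ≤ ((p₁ / q₁ - z₀) / v).im ∧ 0 ≤ ((p₂ / q₂ - z₀) / v).im ∧
      ∀ w ∈ geoSet (p₁ / q₁) (p₂ / q₂), 0 ≤ ((w.1 - z₀) / v).im) ∨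
    (((p₁ / q₁ - z₀) / v).im ≤ 0 ∧ ((p₂ / q₂ - z₀) / v).im ≤ 0 ∧
      ∀ w ∈ geoSet (p₁ / q₁) (p₂ / q₂), ((w.1 - z₀) / v).im ≤ 0) := by
  have mem0 : (0:ℂ) ∈ ringInt d := ⟨0, 0, by simp⟩
  have mem1 : (1:ℂ) ∈ ringInt d := ⟨1, 0, by simp⟩
  have memw : omegaD d ∈ ringInt d := ⟨0, 1, by simp⟩
  have memw1 : omegaD d - 1 ∈ ringInt d := ⟨-1, 1, by push_cast; ring⟩
  have hd1 : 1 ≤ d := by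
    simp only [Set.mem_insert_iff, Set.mem_singleton_iff] at hd
    omega
  by_cases hd4 : d % 4 = 3
  · obtain ⟨hI, hsq, hconj, h1A, habs⟩ := facts_3 d hd4
    have hw0 : omegaD d ≠ 0 := by
      intro h; rw [h] at hI; simp at hI
    have hw10 : omegaD d - 1 ≠ 0 := by
      intro h
      have : (omegaD d - 1).im = 0 := by rw [h]; simp
      rw [Complex.sub_im, Complex.one_im] at this
      linarith
    simp only [wallParams, if_pos hd4, Set.mem_insert_iff, Set.mem_singleton_iff,
      Prod.mk.injEq] at hw
    rcases hw with ⟨rfl, rfl⟩ | ⟨rfl, rfl⟩ | ⟨rfl, rfl⟩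
    · exact main_lemma d 0 1 hI hsq hconj mem0 mem1 one_ne_zero
        (by rw [norm_one]; exact h1A) p₁ q₁ p₂ q₂ hp₁ hq₁ hp₂ hq₂ hq₁0 hq₂0 hdet
    · exact main_lemma d 0 (omegaD d) hI hsq hconj mem0 memw hw0 le_rfl
        p₁ q₁ p₂ q₂ hp₁ hq₁ hp₂ hq₂ hq₁0 hq₂0 hdet
    · exact main_lemma d 1 (omegaD d - 1) hI hsq hconj mem1 memw1 hw10 habs.le
        p₁ q₁ p₂ q₂ hp₁ hq₁ hp₂ hq₂ hq₁0 hq₂0 hdet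
  · obtain ⟨hI, hsq, hconj, h1A⟩ := facts_ne3 d hd4 hd1
    have hw0 : omegaD d ≠ 0 := by
      intro h; rw [h] at hI; simp at hI
    simp only [wallParams, if_neg hd4, Set.mem_insert_iff, Set.mem_singleton_iff,
      Prod.mk.injEq] at hw
    rcases hw with ⟨rfl, rfl⟩ | ⟨rfl, rfl⟩ | ⟨rfl, rfl⟩ | ⟨rfl, rfl⟩
    · exact main_lemma d 0 1 hI hsq hconj mem0 mem1 one_ne_zero
        (by rw [norm_one]; exact h1A) p₁ q₁ p₂ q₂ hp₁ hq₁ hp₂ hq₂ hq₁0 hq₂0 hdet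
    · exact main_lemma d (omegaD d) 1 hI hsq hconj memw mem1 one_ne_zero
        (by rw [norm_one]; exact h1A) p₁ q₁ p₂ q₂ hp₁ hq₁ hp₂ hq₂ hq₁0 hq₂0 hdet
    · exact main_lemma d 0 (omegaD d) hI hsq hconj mem0 memw hw0 le_rfl
        p₁ q₁ p₂ q₂ hp₁ hq₁ hp₂ hq₂ hq₁0 hq₂0 hdet
    · exact main_lemma d 1 (omegaD d) hI hsq hconj mem1 memw hw0 le_rfl
        p₁ q₁ p₂ q₂ hp₁ hq₁ hp₂ hq₂ hq₁0 hq₂0 hdet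
end

section
/- Let d ∈ {2,7,11}, ℓ = 4 if d ∈ {2,7} and ℓ = 6 if d = 11, and λ = √(ℓ/2) = |ω_d|. Let 0 < y < 1 and n ≥ 1, and assume the first n digits of both algorithms below are defined (i.e., the relevant iterates of F_ℓ at yλ and of S_d at yω_d are nonzero). Then: for every k ≥ 0 with 2k+1 ≤ n, P_{d,2k+1}(yω_d) = p_{ℓ,2k+1}(yλ) and Q_{d,2k+1}(yω_d) = q_{ℓ,2k+1}(yλ)·(conj(ω_d)/λ); and for every k ≥ 1 with 2k ≤ n, P_{d,2k}(yω_d) = p_{ℓ,2k}(yλ)·(ω_d/λ) and Q_{d,2k}(yω_d) = q_{ℓ,2k}(yλ). In particular corresponding numerators and denominators have the same absolute value. -/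
/-- `⌈x⌉_ℓ = kλ` for the unique integer `k` with `x ∈ ((k−1)λ, kλ]`
(here `λ = √(ℓ/2)`). -/
noncomputable def ceilL (lam x : ℝ) : ℝ := ((⌈x / lam⌉ : ℤ) : ℝ) * lam

/-- The real continued fraction map `F_ℓ(x) = ⌈1/x⌉_ℓ − 1/x`, `F_ℓ(0) = 0`. -/
noncomputable def Fmap (lam : ℝ) (x : ℝ) : ℝ :=
  if x = 0 then 0 else ceilL lam (1 / x) - 1 / x

/-- The digits `b_{ℓ,n}(x) = ⌈1/F_ℓ^{n−1}(x)⌉_ℓ` of the real algorithm. -/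
noncomputable def bdig (lam x : ℝ) (n : ℕ) : ℝ := ceilL lam (1 / ((Fmap lam)^[n - 1] x))

/-- Numerators of the convergents attached to a digit sequence `b` by the
matrix identity of the paper: `p₀ = 0`, `p₁ = 1`, `p_n = b_n p_{n−1} − p_{n−2}`
(`b 0` is unused). -/
noncomputable def recP {K : Type*} [Field K] (b : ℕ → K) : ℕ → K
  | 0 => 0
  | 1 => 1
  | (k + 2) => b (k + 2) * recP b (k + 1) - recP b k

/-- Denominators of the convergents attached to a digit sequence `b`:
`q₀ = 1`, `q₁ = b₁`, `q_n = b_n q_{n−1} − q_{n−2}`. -/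
noncomputable def recQ {K : Type*} [Field K] (b : ℕ → K) : ℕ → K
  | 0 => 1
  | 1 => b 1
  | (k + 2) => b (k + 2) * recQ b (k + 1) - recQ b k

open Classical in
/-- The ceiling `⌈w⌉_d` along the rays `ℝ₊·ω_d` and `ℝ₊·conj(ω_d)`:
for `w = y·ω_d` it is `⌈y⌉·ω_d`, otherwise (for `w = y·conj(ω_d)`) it is
`⌈y⌉·conj(ω_d)`. -/
noncomputable def cdCeil (d : ℕ) (w : ℂ) : ℂ :=
  if ∃ y : ℝ, 0 < y ∧ w = (y : ℂ) * omegaD d then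
    ((⌈(w / omegaD d).re⌉ : ℤ) : ℂ) * omegaD d
  else ((⌈(w / (starRingEnd ℂ) (omegaD d)).re⌉ : ℤ) : ℂ) * (starRingEnd ℂ) (omegaD d)

/-- The complex continued fraction map `S_d(z) = ⌈1/z⌉_d − 1/z`, `S_d(0) = 0`,
on the set `J_d`. -/
noncomputable def SmapJ (d : ℕ) (z : ℂ) : ℂ :=
  if z = 0 then 0 else cdCeil d (1 / z) - 1 / z

/-- The digits `B_{d,n}(z) = ⌈1/S_d^{n−1}(z)⌉_d` of the complex algorithm. -/
noncomputable def BdigJ (d : ℕ) (z : ℂ) (n : ℕ) : ℂ := cdCeil d (1 / ((SmapJ d)^[n - 1] z))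


private lemma twoStep {M : ℕ → Prop} (h0 : M 0) (h1 : M 1)
    (hstep : ∀ k, M k → M (k+1) → M (k+2)) : ∀ k, M k := by
  have h : ∀ k, M k ∧ M (k+1) := by
    intro k
    induction k with
    | zero => exact ⟨h0, h1⟩
    | succ k ih => exact ⟨ih.2, hstep k ih.1 ih.2⟩
  exact fun k => (h k).1

private lemma recP_ofReal (b : ℕ → ℝ) :
    ∀ k, recP (fun i => ((b i : ℝ) : ℂ)) k = ((recP b k : ℝ) : ℂ) := by
  apply twoStep
  · simp [recP]
  · simp [recP]
  · intro k h1 h2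
    simp only [recP, h1, h2]
    push_cast
    ring

private lemma recQ_ofReal (b : ℕ → ℝ) :
    ∀ k, recQ (fun i => ((b i : ℝ) : ℂ)) k = ((recQ b k : ℝ) : ℂ) := by
  apply twoStep
  · simp [recQ]
  · simp [recQ]
  · intro k h1 h2
    simp only [recQ, h1, h2]
    push_cast
    ring

/-- For `d ∈ {2,7,11}`, `ℓ = 4` resp. `6`, `λ = √(ℓ/2)`,
`0 < y < 1` and `n ≥ 1` such that the first `n` digits of both algorithms are
defined: `P_{d,2k+1}(yω_d) = p_{ℓ,2k+1}(yλ)`,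
`Q_{d,2k+1}(yω_d) = q_{ℓ,2k+1}(yλ)·(conj(ω_d)/λ)` for `2k+1 ≤ n`, and
`P_{d,2k}(yω_d) = p_{ℓ,2k}(yλ)·(ω_d/λ)`, `Q_{d,2k}(yω_d) = q_{ℓ,2k}(yλ)` for
`1 ≤ k`, `2k ≤ n`; in particular corresponding numerators and denominators
have the same absolute value. -/
theorem complex_real_convergent_correspondence (d l : ℕ) (hd : d ∈ ({2, 7, 11} : Set ℕ))
    (hl : l = if d = 11 then 6 else 4) (lam : ℝ) (hlam : lam = Real.sqrt ((l : ℝ) / 2))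
    (y : ℝ) (hy0 : 0 < y) (hy1 : y < 1) (n : ℕ) (hn : 1 ≤ n)
    (hFdef : ∀ k < n, (Fmap lam)^[k] (y * lam) ≠ 0)
    (hSdef : ∀ k < n, (SmapJ d)^[k] ((y : ℂ) * omegaD d) ≠ 0) :
    (∀ k : ℕ, 2 * k + 1 ≤ n →
      recP (BdigJ d ((y : ℂ) * omegaD d)) (2 * k + 1) =
        ((recP (bdig lam (y * lam)) (2 * k + 1) : ℝ) : ℂ) ∧
      recQ (BdigJ d ((y : ℂ) * omegaD d)) (2 * k + 1) =
        ((recQ (bdig lam (y * lam)) (2 * k + 1) : ℝ) : ℂ) *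
          ((starRingEnd ℂ) (omegaD d) / (lam : ℂ))) ∧
    (∀ k : ℕ, 1 ≤ k → 2 * k ≤ n →
      recP (BdigJ d ((y : ℂ) * omegaD d)) (2 * k) =
        ((recP (bdig lam (y * lam)) (2 * k) : ℝ) : ℂ) * (omegaD d / (lam : ℂ)) ∧
      recQ (BdigJ d ((y : ℂ) * omegaD d)) (2 * k) =
        ((recQ (bdig lam (y * lam)) (2 * k) : ℝ) : ℂ)) ∧
    (∀ m ≤ n, ‖recP (BdigJ d ((y : ℂ) * omegaD d)) m‖ =
        |recP (bdig lam (y * lam)) m| ∧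
      ‖recQ (BdigJ d ((y : ℂ) * omegaD d)) m‖ =
        |recQ (bdig lam (y * lam)) m|) := by
  -- basic facts about ω and λ
  have hns : Complex.normSq (omegaD d) = lam ^ 2 ∧ 0 < (omegaD d).im ∧ 0 < lam := by
    rcases hd with rfl | rfl | rfl
    · have hl4 : l = 4 := by simpa using hl
      have : lam = Real.sqrt 2 := by rw [hlam, hl4]; norm_num
      subst this
      refine ⟨?_, ?_, Real.sqrt_pos.mpr (by norm_num)⟩
      · rw [Real.sq_sqrt (by norm_num)]
        simp [omegaD, Complex.normSq_apply, Complex.mul_im, Complex.mul_re]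
      · simp [omegaD, Complex.mul_im]
    · have hl4 : l = 4 := by simpa using hl
      have : lam = Real.sqrt 2 := by rw [hlam, hl4]; norm_num
      subst this
      refine ⟨?_, ?_, Real.sqrt_pos.mpr (by norm_num)⟩
      · rw [Real.sq_sqrt (by norm_num)]
        simp [omegaD, Complex.normSq_apply, Complex.add_im, Complex.div_im, Complex.div_re,
          Complex.add_re, Complex.mul_im, Complex.mul_re]
        norm_num
      · simp [omegaD, Complex.div_im, Complex.add_im, Complex.mul_im]
    · have hl6 : l = 6 := by simpa using hl
      have : lam = Real.sqrt 3 := by rw [hlam, hl6]; norm_num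
      subst this
      refine ⟨?_, ?_, Real.sqrt_pos.mpr (by norm_num)⟩
      · rw [Real.sq_sqrt (by norm_num)]
        simp [omegaD, Complex.normSq_apply, Complex.add_im, Complex.div_im, Complex.div_re,
          Complex.add_re, Complex.mul_im, Complex.mul_re]
        norm_num
      · simp [omegaD, Complex.div_im, Complex.add_im, Complex.mul_im]
  obtain ⟨hnsq, him, hlampos⟩ := hns
  set ω : ℂ := omegaD d with hω
  have hlamne : (lam : ℂ) ≠ 0 := Complex.ofReal_ne_zero.mpr (ne_of_gt hlampos)
  have hωne : ω ≠ 0 := fun h => by simp [h] at him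
  have hcωne : (starRingEnd ℂ) ω ≠ 0 := by simpa using hωne
  have hmul : (starRingEnd ℂ) ω * ω = ((lam : ℂ))^2 := by
    rw [mul_comm, Complex.mul_conj, hnsq]
    push_cast
    ring
  have hνne : ω / (lam : ℂ) ≠ 0 := div_ne_zero hωne hlamne
  have hμne : (starRingEnd ℂ) ω / (lam : ℂ) ≠ 0 := div_ne_zero hcωne hlamne
  -- inverses of points on the rays
  have hinvν : ∀ x : ℝ, x ≠ 0 → 1 / ((x : ℂ) * (ω / (lam : ℂ))) =
      ((1/x : ℝ) : ℂ) * ((starRingEnd ℂ) ω / (lam : ℂ)) := by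
    intro x hx
    have hx' : (x : ℂ) ≠ 0 := Complex.ofReal_ne_zero.mpr hx
    push_cast
    field_simp
    linear_combination (-1 : ℂ) * hmul
  have hinvμ : ∀ x : ℝ, x ≠ 0 → 1 / ((x : ℂ) * ((starRingEnd ℂ) ω / (lam : ℂ))) =
      ((1/x : ℝ) : ℂ) * (ω / (lam : ℂ)) := by
    intro x hx
    have hx' : (x : ℂ) ≠ 0 := Complex.ofReal_ne_zero.mpr hx
    push_cast
    field_simp
    linear_combination (-1 : ℂ) * hmul
  -- ceiling lemmas on rays
  have hB : ∀ x : ℝ, 0 < x →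
      cdCeil d ((x : ℂ) * (ω / (lam : ℂ))) = ((ceilL lam x : ℝ) : ℂ) * (ω / (lam : ℂ)) := by
    intro x hx
    have hray : (x : ℂ) * (ω / (lam : ℂ)) = ((x/lam : ℝ) : ℂ) * ω := by
      push_cast
      field_simp
      all_goals ring
    rw [hray, cdCeil, if_pos ⟨x/lam, div_pos hx hlampos, rfl⟩]
    have h2 : (((x/lam : ℝ) : ℂ) * ω) / ω = ((x/lam : ℝ) : ℂ) := by
      field_simp
      all_goals ring
    rw [h2]
    rw [show ((x/lam : ℝ) : ℂ).re = x/lam from Complex.ofReal_re _]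
    rw [ceilL, ← hω]
    push_cast
    field_simp
    all_goals ring
  have hA : ∀ x : ℝ, 0 < x →
      cdCeil d ((x : ℂ) * ((starRingEnd ℂ) ω / (lam : ℂ))) =
        ((ceilL lam x : ℝ) : ℂ) * ((starRingEnd ℂ) ω / (lam : ℂ)) := by
    intro x hx
    have hray : (x : ℂ) * ((starRingEnd ℂ) ω / (lam : ℂ)) =
        ((x/lam : ℝ) : ℂ) * (starRingEnd ℂ) ω := by
      push_cast
      field_simp
      all_goals ring
    rw [hray, cdCeil, if_neg]
    · have h2 : (((x/lam : ℝ) : ℂ) * (starRingEnd ℂ) ω) / (starRingEnd ℂ) ω =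
          ((x/lam : ℝ) : ℂ) := by
        field_simp
        all_goals ring
      rw [h2]
      rw [show ((x/lam : ℝ) : ℂ).re = x/lam from Complex.ofReal_re _]
      rw [ceilL, ← hω]
      push_cast
      field_simp
      all_goals ring
    · rintro ⟨t, ht, heq⟩
      have h3 := congrArg Complex.im heq
      simp only [Complex.mul_im, Complex.ofReal_re, Complex.ofReal_im, Complex.conj_im,
        Complex.conj_re, zero_mul, add_zero, mul_zero] at h3
      have hxl : 0 < x / lam := div_pos hx hlampos
      nlinarith [mul_pos hxl him, mul_pos ht him]
  -- correspondence of the iterates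
  have hIter : ∀ k : ℕ, 0 ≤ (Fmap lam)^[k] (y*lam) ∧
      (SmapJ d)^[k] ((y : ℂ) * ω) =
        (((Fmap lam)^[k] (y*lam) : ℝ) : ℂ) *
          (if Even k then ω / (lam : ℂ) else (starRingEnd ℂ) ω / (lam : ℂ)) := by
    intro k
    induction k with
    | zero =>
      refine ⟨le_of_lt (mul_pos hy0 hlampos), ?_⟩
      simp only [Function.iterate_zero, id_eq, if_pos Even.zero]
      push_cast
      field_simp
      all_goals ring
    | succ k ih =>
      obtain ⟨ih0, ih1⟩ := ih
      set x := (Fmap lam)^[k] (y*lam) with hx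
      have hFnonneg : ∀ t : ℝ, 0 ≤ Fmap lam t := by
        intro t
        rw [Fmap]
        split
        · exact le_refl 0
        · rw [ceilL]
          have h4 := Int.le_ceil ((1/t)/lam)
          have h5 : (1/t)/lam * lam ≤ (⌈(1/t)/lam⌉ : ℝ) * lam :=
            mul_le_mul_of_nonneg_right h4 (le_of_lt hlampos)
          rw [div_mul_cancel₀ _ (ne_of_gt hlampos)] at h5
          linarith
      rw [Function.iterate_succ_apply', Function.iterate_succ_apply', ← hx, ih1]
      rcases eq_or_lt_of_le ih0 with h0 | h0
      · rw [← h0]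
        simp [SmapJ, Fmap]
      · refine ⟨hFnonneg x, ?_⟩
        have hxC : ((x : ℝ) : ℂ) ≠ 0 := Complex.ofReal_ne_zero.mpr (ne_of_gt h0)
        have hFx : Fmap lam x = ceilL lam (1/x) - 1/x := by
          rw [Fmap, if_neg (ne_of_gt h0)]
        by_cases hek : Even k
        · have hek1 : ¬ Even (k+1) := by simp [Nat.even_add_one, hek]
          rw [if_pos hek, if_neg hek1]
          rw [SmapJ, if_neg (mul_ne_zero hxC hνne)]
          rw [hinvν x (ne_of_gt h0), hA _ (by positivity), hFx]
          push_cast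
          ring
        · have hek1 : Even (k+1) := by simp [Nat.even_add_one, hek]
          rw [if_neg hek, if_pos hek1]
          rw [SmapJ, if_neg (mul_ne_zero hxC hμne)]
          rw [hinvμ x (ne_of_gt h0), hB _ (by positivity), hFx]
          push_cast
          ring
  -- correspondence of the digits
  have hDig : ∀ m : ℕ, 1 ≤ m → m ≤ n →
      BdigJ d ((y : ℂ) * ω) m =
        ((bdig lam (y*lam) m : ℝ) : ℂ) *
          (if Even m then ω / (lam : ℂ) else (starRingEnd ℂ) ω / (lam : ℂ)) := by
    intro m hm1 hmn
    obtain ⟨hpos0, hit⟩ := hIter (m-1)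
    have hxpos : 0 < (Fmap lam)^[m-1] (y*lam) :=
      lt_of_le_of_ne hpos0 (Ne.symm (hFdef (m-1) (by omega)))
    rw [BdigJ, hit, bdig]
    have hparity : Even (m-1) ↔ ¬ Even m := by
      rw [Nat.even_sub hm1]
      simp
    by_cases hem : Even m
    · have hem1 : ¬ Even (m-1) := fun h => (hparity.mp h) hem
      rw [if_neg hem1, if_pos hem]
      rw [hinvμ _ (ne_of_gt hxpos), hB _ (by positivity)]
    · have hem1 : Even (m-1) := hparity.mpr hem
      rw [if_pos hem1, if_neg hem]
      rw [hinvν _ (ne_of_gt hxpos), hA _ (by positivity)]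
  have hμν : ((starRingEnd ℂ) ω / (lam : ℂ)) * (ω / (lam : ℂ)) = 1 := by
    field_simp
    linear_combination hmul
  -- main correspondence for the convergents
  have hMain : ∀ j : ℕ, j ≤ n →
      recP (BdigJ d ((y : ℂ) * ω)) j =
        ((recP (bdig lam (y*lam)) j : ℝ) : ℂ) * (if Even j then ω / (lam : ℂ) else 1) ∧
      recQ (BdigJ d ((y : ℂ) * ω)) j =
        ((recQ (bdig lam (y*lam)) j : ℝ) : ℂ) *
          (if Even j then 1 else (starRingEnd ℂ) ω / (lam : ℂ)) := by
    apply twoStep (M := fun j => j ≤ n →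
      recP (BdigJ d ((y : ℂ) * ω)) j =
        ((recP (bdig lam (y*lam)) j : ℝ) : ℂ) * (if Even j then ω / (lam : ℂ) else 1) ∧
      recQ (BdigJ d ((y : ℂ) * ω)) j =
        ((recQ (bdig lam (y*lam)) j : ℝ) : ℂ) *
          (if Even j then 1 else (starRingEnd ℂ) ω / (lam : ℂ)))
    · intro _
      simp [recP, recQ]
    · intro h1
      constructor
      · simp [recP, Nat.not_even_one]
      · simp only [recQ]
        rw [hDig 1 le_rfl h1]
        simp [Nat.not_even_one]
    · intro k ih1 ih2 h
      have hk : k ≤ n := by omega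
      have hk1 : k + 1 ≤ n := by omega
      obtain ⟨hp0, hq0⟩ := ih1 hk
      obtain ⟨hp1, hq1⟩ := ih2 hk1
      have hb2 := hDig (k+2) (by omega) h
      have he2 : Even (k+2) ↔ Even k := by simp [Nat.even_add_one]
      have he1 : Even (k+1) ↔ ¬ Even k := Nat.even_add_one
      by_cases hek : Even k
      · rw [if_pos hek] at hp0 hq0
        rw [if_neg (fun hh => (he1.mp hh) hek)] at hp1 hq1
        constructor
        · simp only [recP]
          rw [hb2, hp0, hp1, if_pos (he2.mpr hek), if_pos (he2.mpr hek)]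
          push_cast
          ring
        · simp only [recQ]
          rw [hb2, hq0, hq1, if_pos (he2.mpr hek), if_pos (he2.mpr hek)]
          push_cast
          linear_combination (((bdig lam (y*lam) (k+2) : ℝ) : ℂ) *
            ((recQ (bdig lam (y*lam)) (k+1) : ℝ) : ℂ)) * hμν
      · rw [if_neg hek] at hp0 hq0
        rw [if_pos (he1.mpr hek)] at hp1 hq1
        have hne2 : ¬ Even (k+2) := fun hh => hek (he2.mp hh)
        constructor
        · simp only [recP]
          rw [hb2, hp0, hp1, if_neg hne2, if_neg hne2]
          push_cast
          linear_combination (((bdig lam (y*lam) (k+2) : ℝ) : ℂ) *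
            ((recP (bdig lam (y*lam)) (k+1) : ℝ) : ℂ)) * hμν
        · simp only [recQ]
          rw [hb2, hq0, hq1, if_neg hne2, if_neg hne2]
          push_cast
          ring
  have habsω : ‖ω‖ = lam := by
    rw [Complex.norm_def, hnsq, Real.sqrt_sq hlampos.le]
  have habsν : ‖ω / (lam : ℂ)‖ = 1 := by
    rw [norm_div, habsω, Complex.norm_real, Real.norm_eq_abs, abs_of_pos hlampos, div_self (ne_of_gt hlampos)]
  have habsμ : ‖(starRingEnd ℂ) ω / (lam : ℂ)‖ = 1 := by
    rw [norm_div, Complex.norm_conj, habsω, Complex.norm_real, Real.norm_eq_abs, abs_of_pos hlampos,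
      div_self (ne_of_gt hlampos)]
  refine ⟨?_, ?_, ?_⟩
  · intro k hk
    obtain ⟨h1, h2⟩ := hMain (2*k+1) hk
    have hodd : ¬ Even (2*k+1) := by simp [Nat.even_add_one]
    rw [if_neg hodd, mul_one] at h1
    rw [if_neg hodd] at h2
    exact ⟨h1, h2⟩
  · intro k hk1 hk2
    obtain ⟨h1, h2⟩ := hMain (2*k) hk2
    have hev : Even (2*k) := even_two_mul k
    rw [if_pos hev] at h1
    rw [if_pos hev, mul_one] at h2
    exact ⟨h1, h2⟩
  · intro m hm
    obtain ⟨h1, h2⟩ := hMain m hm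
    have ha : ‖(if Even m then ω / (lam : ℂ) else 1)‖ = 1 := by
      split
      · exact habsν
      · simp
    have hb : ‖(if Even m then 1 else (starRingEnd ℂ) ω / (lam : ℂ))‖ = 1 := by
      split
      · simp
      · exact habsμ
    constructor
    · rw [h1, norm_mul, ha, mul_one, Complex.norm_real, Real.norm_eq_abs]
    · rw [h2, norm_mul, hb, mul_one, Complex.norm_real, Real.norm_eq_abs]
end
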